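/- arXiv:2602.06728 — 3 statements merged into one kernel-verified Lean document; each statement's English description precedes it below -/
import Mathlib

section
/- Every countable metric space without isolated points is homeomorphic to the rational numbers with the metric inherited from ℝ. -/
open Metric Set Topology
set_option linter.unusedSectionVars false


noncomputable def sierG (j : ℤ) : ℝ := (2:ℝ)^j / ((2:ℝ)^j + 1)

lemma sierG_pos (j : ℤ) : 0 < sierG j := by
  have h : (0:ℝ) < (2:ℝ)^j := zpow_pos (by norm_num) _
  exact div_pos h (by linarith)

lemma sierG_lt_one (j : ℤ) : sierG j < 1 := by
  have h : (0:ℝ) < (2:ℝ)^j := zpow_pos (by norm_num) _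
  rw [sierG, div_lt_one (by linarith)]; linarith

lemma sierG_strictMono : StrictMono sierG := by
  intro j j' hj
  have ht : (0:ℝ) < (2:ℝ)^j := zpow_pos (by norm_num) _
  have ht' : (0:ℝ) < (2:ℝ)^j' := zpow_pos (by norm_num) _
  have htt : (2:ℝ)^j < (2:ℝ)^j' := zpow_lt_zpow_right₀ (by norm_num) hj
  rw [sierG, sierG, div_lt_div_iff₀ (by linarith) (by linarith)]
  nlinarith

lemma sierG_gap (j : ℤ) : sierG (j+1) - sierG j ≤ 1/2 := by
  have ht : (0:ℝ) < (2:ℝ)^j := zpow_pos (by norm_num) _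
  have h2 : (2:ℝ)^(j+1) = 2 * (2:ℝ)^j := by
    rw [zpow_add_one₀ (by norm_num : (2:ℝ) ≠ 0)]; ring
  rw [sierG, sierG, h2, div_sub_div _ _ (by linarith) (by linarith), div_le_div_iff₀ (by nlinarith) (by norm_num)]
  nlinarith

noncomputable def sierZ : ℕ → ℤ := fun n => Equiv.intEquivNat.symm n

lemma sierZ_inj : Function.Injective sierZ := Equiv.intEquivNat.symm.injective
lemma sierZ_surj : Function.Surjective sierZ := Equiv.intEquivNat.symm.surjective

noncomputable def sierE : List ℕ → ℝ × ℝ := fun s =>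
  List.rec ((0:ℝ),(1:ℝ))
    (fun k _s p => (p.1 + (p.2-p.1) * sierG (sierZ k), p.1 + (p.2-p.1) * sierG (sierZ k + 1))) s

lemma sierE_nil : sierE [] = (0,1) := rfl
lemma sierE_cons (k : ℕ) (s : List ℕ) :
    sierE (k :: s) = ((sierE s).1 + ((sierE s).2-(sierE s).1) * sierG (sierZ k),
      (sierE s).1 + ((sierE s).2-(sierE s).1) * sierG (sierZ k + 1)) := rfl

lemma sierE_basic (s : List ℕ) :
    0 ≤ (sierE s).1 ∧ (sierE s).1 < (sierE s).2 ∧ (sierE s).2 ≤ 1 ∧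
      (sierE s).2 - (sierE s).1 ≤ (1/2)^s.length := by
  induction s with
  | nil => simp [sierE_nil]
  | cons k s ih =>
    obtain ⟨h0, h1, h2, h3⟩ := ih
    have hL : 0 < (sierE s).2 - (sierE s).1 := by linarith
    have g1 := sierG_pos (sierZ k)
    have g2 := sierG_lt_one (sierZ k + 1)
    have g3 : sierG (sierZ k) < sierG (sierZ k + 1) := sierG_strictMono (by omega)
    have g4 := sierG_gap (sierZ k)
    rw [sierE_cons]; dsimp only
    refine ⟨by nlinarith, by nlinarith, by nlinarith, ?_⟩
    simp only [List.length_cons, pow_succ]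
    have : (sierE (k::s)).2 - (sierE (k::s)).1
        = ((sierE s).2-(sierE s).1) * (sierG (sierZ k + 1) - sierG (sierZ k)) := by
      rw [sierE_cons]; ring
    calc ((sierE s).1 + ((sierE s).2-(sierE s).1) * sierG (sierZ k + 1))
          - ((sierE s).1 + ((sierE s).2-(sierE s).1) * sierG (sierZ k))
        = ((sierE s).2-(sierE s).1) * (sierG (sierZ k + 1) - sierG (sierZ k)) := by ring
      _ ≤ (1/2)^s.length * (1/2) := by
          apply mul_le_mul h3 (by linarith) (by linarith) (by positivity)

lemma sierE_child (k : ℕ) (s : List ℕ) :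
    (sierE s).1 < (sierE (k::s)).1 ∧ (sierE (k::s)).1 < (sierE (k::s)).2 ∧
      (sierE (k::s)).2 < (sierE s).2 := by
  obtain ⟨h0, h1, h2, h3⟩ := sierE_basic s
  obtain ⟨h0', h1', h2', h3'⟩ := sierE_basic (k::s)
  have g1 := sierG_pos (sierZ k)
  have g2 := sierG_lt_one (sierZ k + 1)
  rw [sierE_cons]; dsimp only
  exact ⟨by nlinarith, by nlinarith [sierG_strictMono (show sierZ k < sierZ k + 1 by omega)], by nlinarith⟩

lemma sierE_sib {k l : ℕ} (s : List ℕ) (h : sierZ k < sierZ l) :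
    (sierE (k::s)).2 ≤ (sierE (l::s)).1 := by
  obtain ⟨h0, h1, h2, h3⟩ := sierE_basic s
  have g : sierG (sierZ k + 1) ≤ sierG (sierZ l) := sierG_strictMono.monotone (by omega)
  rw [sierE_cons, sierE_cons]; dsimp only
  nlinarith

section Sier
variable {M : Type*} [MetricSpace M] [Countable M]

lemma sier_clopen_ball (x : M) {ε : ℝ} (hε : 0 < ε) :
    ∃ r : ℝ, 0 < r ∧ r < ε ∧ IsClopen (Metric.ball x r) := by
  have hD : (Set.range (dist x)).Countable := Set.countable_range _
  have hI : ¬ (Set.Ioo (0:ℝ) ε).Countable := by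
    intro hc
    have := hc.mono (subset_refl _)
    have := hc.to_subtype
    have h1 : (Cardinal.mk (Set.Ioo (0:ℝ) ε)) ≤ Cardinal.aleph0 := Cardinal.mk_le_aleph0
    rw [Cardinal.mk_Ioo_real hε] at h1
    exact absurd h1 (not_le.mpr Cardinal.aleph0_lt_continuum)
  obtain ⟨r, hr, hrD⟩ : ∃ r ∈ Set.Ioo (0:ℝ) ε, r ∉ Set.range (dist x) := by
    by_contra hcon
    push_neg at hcon
    exact hI (hD.mono hcon)
  refine ⟨r, hr.1, hr.2, ?_, isOpen_ball⟩
  have : Metric.ball x r = Metric.closedBall x r := by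
    apply Set.Subset.antisymm Metric.ball_subset_closedBall
    intro y hy
    rcases lt_or_eq_of_le (Metric.mem_closedBall.mp hy) with h | h
    · exact h
    · exact absurd ⟨y, by rw [dist_comm]; exact h⟩ hrD
  rw [this]; exact Metric.isClosed_closedBall

variable (hni : ∀ x : M, ¬ IsOpen ({x} : Set M))
include hni

lemma sier_infinite {U : Set M} (hU : IsOpen U) (hne : U.Nonempty) : U.Infinite := by
  intro hfin
  obtain ⟨x, hx⟩ := hne
  have h1 : IsClosed (U \ {x}) := ((hfin.diff).isClosed)
  obtain ⟨r1, hr1, hball1⟩ := Metric.isOpen_iff.mp hU x hx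
  obtain ⟨r2, hr2, hball2⟩ := Metric.isOpen_iff.mp h1.isOpen_compl x (by simp)
  apply hni x
  have : Metric.ball x (min r1 r2) = {x} := by
    apply Set.Subset.antisymm
    · intro y hy
      have hyU : y ∈ U := hball1 (Metric.ball_subset_ball (min_le_left _ _) hy)
      have hyC : y ∉ U \ {x} := hball2 (Metric.ball_subset_ball (min_le_right _ _) hy)
      simp only [Set.mem_diff, not_and, not_not] at hyC
      exact hyC hyU
    · intro y hy; simp at hy; subst hy; exact Metric.mem_ball_self (lt_min hr1 hr2)
  rw [← this]; exact Metric.isOpen_ball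

-- small clopen piece around a designated point, leaving nonempty remainder
lemma sier_split {R : Set M} (hR : IsClopen R) (hne : R.Nonempty) (c : M) {ε : ℝ} (hε : 0 < ε) :
    ∃ V : Set M, IsClopen V ∧ V ⊆ R ∧ V.Nonempty ∧ (c ∈ R → c ∈ V) ∧
      (R \ V).Nonempty ∧ ∀ y ∈ V, ∀ z ∈ V, dist y z ≤ ε := by
  have hRopen := hR.isOpen
  -- choose center
  obtain ⟨c', hc'R, hc'⟩ : ∃ c' ∈ R, (c ∈ R → c' = c) := by
    by_cases h : c ∈ R
    · exact ⟨c, h, fun _ => rfl⟩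
    · exact ⟨hne.some, hne.some_mem, fun hc => absurd hc h⟩
  -- another point
  obtain ⟨y, hyR, hyne⟩ : ∃ y ∈ R, y ≠ c' := by
    have := sier_infinite hni hRopen hne
    obtain ⟨y, hy, hyne⟩ := (this.diff (Set.finite_singleton c')).nonempty
    exact ⟨y, hy, by simpa using hyne⟩
  obtain ⟨r1, hr1, hball1⟩ := Metric.isOpen_iff.mp hRopen c' hc'R
  obtain ⟨r, hr0, hrlt, hrcl⟩ := sier_clopen_ball c'
    (lt_min (lt_min hr1 (by positivity : (0:ℝ) < ε/2))
      (dist_pos.mpr (fun hh => hyne hh.symm) : 0 < dist c' y))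
  have hrε : r < ε/2 := hrlt.trans_le ((min_le_left _ _).trans (min_le_right _ _))
  have hrr1 : r < r1 := hrlt.trans_le ((min_le_left _ _).trans (min_le_left _ _))
  have hrdy : r < dist c' y := hrlt.trans_le (min_le_right _ _)
  refine ⟨Metric.ball c' r, hrcl, ?_, ⟨c', Metric.mem_ball_self hr0⟩, ?_, ⟨y, hyR, ?_⟩, ?_⟩
  · exact (Metric.ball_subset_ball hrr1.le).trans hball1
  · intro hc; rw [hc' hc]; exact Metric.mem_ball_self hr0
  · intro hy; rw [Metric.mem_ball, dist_comm] at hy; exact absurd hy (not_lt.mpr hrdy.le)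
  · intro a ha b hb
    have : dist a b < r + r := by
      calc dist a b ≤ dist a c' + dist c' b := dist_triangle _ _ _
        _ < r + r := by
            rw [Metric.mem_ball] at ha hb
            rw [dist_comm c' b] at *
            exact add_lt_add ha hb
    linarith


lemma sier_partition (u : ℕ → M) (hu : Function.Surjective u)
    {U : Set M} (hU : IsClopen U) (hne : U.Nonempty) {ε : ℝ} (hε : 0 < ε) :
    ∃ V : ℕ → Set M, (∀ k, IsClopen (V k)) ∧ (∀ k, (V k).Nonempty) ∧ (∀ k, V k ⊆ U) ∧
      (∀ k, ∀ y ∈ V k, ∀ z ∈ V k, dist y z ≤ ε) ∧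
      (∀ m n, m ≠ n → Disjoint (V m) (V n)) ∧ (⋃ k, V k) = U := by
  have key : ∀ (R : Set M) (k : ℕ), ∃ V : Set M, (IsClopen R ∧ R.Nonempty) →
      (IsClopen V ∧ V ⊆ R ∧ V.Nonempty ∧ (u k ∈ R → u k ∈ V) ∧ (R \ V).Nonempty ∧
        ∀ y ∈ V, ∀ z ∈ V, dist y z ≤ ε) := by
    intro R k
    by_cases h : IsClopen R ∧ R.Nonempty
    · obtain ⟨V, h1, h2, h3, h4, h5, h6⟩ := sier_split hni h.1 h.2 (u k) hε
      exact ⟨V, fun _ => ⟨h1, h2, h3, h4, h5, h6⟩⟩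
    · exact ⟨∅, fun hh => absurd hh h⟩
  choose F hF using key
  set Rs : ℕ → Set M := fun n => Nat.rec U (fun k Rk => Rk \ F Rk k) n with hRs
  have hstep : ∀ n, Rs (n+1) = Rs n \ F (Rs n) n := fun n => rfl
  have hinv : ∀ n, IsClopen (Rs n) ∧ (Rs n).Nonempty ∧ Rs n ⊆ U := by
    intro n
    induction n with
    | zero => exact ⟨hU, hne, subset_refl _⟩
    | succ k ih =>
      obtain ⟨h1, h2, h3, h4, h5, h6⟩ := hF (Rs k) k ⟨ih.1, ih.2.1⟩
      rw [hstep]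
      exact ⟨ih.1.diff h1, h5, (Set.diff_subset).trans ih.2.2⟩
  set V : ℕ → Set M := fun k => F (Rs k) k with hV
  have hFk : ∀ k, IsClopen (V k) ∧ V k ⊆ Rs k ∧ (V k).Nonempty ∧
      (u k ∈ Rs k → u k ∈ V k) ∧ (Rs k \ V k).Nonempty ∧
      ∀ y ∈ V k, ∀ z ∈ V k, dist y z ≤ ε :=
    fun k => hF (Rs k) k ⟨(hinv k).1, (hinv k).2.1⟩
  have hanti : ∀ m n, m ≤ n → Rs n ⊆ Rs m := by
    intro m n hmn
    induction n with
    | zero => simp_all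
    | succ k ih =>
      rcases Nat.lt_or_ge m (k+1) with h | h
      · exact ((hstep k ▸ Set.diff_subset)).trans (ih (Nat.lt_succ_iff.mp h))
      · have : m = k + 1 := le_antisymm hmn h
        subst this; exact subset_refl _
  refine ⟨V, fun k => (hFk k).1, fun k => (hFk k).2.2.1,
    fun k => ((hFk k).2.1).trans (hinv k).2.2, fun k => (hFk k).2.2.2.2.2, ?_, ?_⟩
  · have hdis : ∀ m n, m < n → Disjoint (V m) (V n) := by
      intro m n hmn
      have h1 : V n ⊆ Rs (m+1) := ((hFk n).2.1).trans (hanti (m+1) n hmn)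
      rw [hstep m] at h1
      exact Set.disjoint_of_subset_right h1 (Set.disjoint_sdiff_right.mono_left (subset_refl _)) |>.symm
        |>.symm
    intro m n hmn
    rcases lt_or_gt_of_ne hmn with h | h
    · exact hdis m n h
    · exact (hdis n m h).symm
  · apply Set.Subset.antisymm
    · exact Set.iUnion_subset fun k => ((hFk k).2.1).trans (hinv k).2.2
    · intro x hx
      by_contra hcon
      simp only [Set.mem_iUnion, not_exists] at hcon
      have hxR : ∀ j, x ∈ Rs j := by
        intro j
        induction j with
        | zero => exact hx
        | succ k ih =>
          rw [hstep]
          exact ⟨ih, hcon k⟩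
      obtain ⟨k, hk⟩ := hu x
      exact hcon k (hk ▸ (hFk k).2.2.2.1 (hk ▸ hxR k))


lemma sier_scheme (u : ℕ → M) (hu : Function.Surjective u) :
    ∃ A : List ℕ → Set M, A [] = Set.univ ∧
      (∀ s, IsClopen (A s) ∧ (A s).Nonempty) ∧
      (∀ s, (⋃ k, A (k :: s)) = A s) ∧
      (∀ s (k l : ℕ), k ≠ l → Disjoint (A (k::s)) (A (l::s))) ∧
      (∀ s (k : ℕ), ∀ y ∈ A (k::s), ∀ z ∈ A (k::s), dist y z ≤ (1/2)^(s.length)) := by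
  have hMne : Nonempty M := ⟨u 0⟩
  have key : ∀ (U : Set M) (n : ℕ), ∃ V : ℕ → Set M, (IsClopen U ∧ U.Nonempty) →
      ((∀ k, IsClopen (V k)) ∧ (∀ k, (V k).Nonempty) ∧ (∀ k, V k ⊆ U) ∧
      (∀ k, ∀ y ∈ V k, ∀ z ∈ V k, dist y z ≤ (1/2)^n) ∧
      (∀ m k, m ≠ k → Disjoint (V m) (V k)) ∧ (⋃ k, V k) = U) := by
    intro U n
    by_cases h : IsClopen U ∧ U.Nonempty
    · obtain ⟨V, hV⟩ := sier_partition hni u hu h.1 h.2 (by positivity : (0:ℝ) < (1/2)^n)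
      exact ⟨V, fun _ => hV⟩
    · exact ⟨fun _ => ∅, fun hh => absurd hh h⟩
  choose G hG using key
  set A : List ℕ → Set M :=
    fun s => List.rec Set.univ (fun k s' As' => G As' s'.length k) s with hA
  have hAcons : ∀ (k : ℕ) s, A (k :: s) = G (A s) s.length k := fun _ _ => rfl
  have hinv : ∀ s, IsClopen (A s) ∧ (A s).Nonempty := by
    intro s
    induction s with
    | nil => exact ⟨isClopen_univ, Set.univ_nonempty⟩
    | cons k s ih =>
      obtain ⟨h1, h2, h3, h4, h5, h6⟩ := hG (A s) s.length ih
      exact ⟨h1 k, h2 k⟩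
  refine ⟨A, rfl, hinv, ?_, ?_, ?_⟩
  · intro s; exact (hG (A s) s.length (hinv s)).2.2.2.2.2
  · intro s k l hkl; exact (hG (A s) s.length (hinv s)).2.2.2.2.1 k l hkl
  · intro s k; exact (hG (A s) s.length (hinv s)).2.2.2.1 k

end Sier


/-- Sierpiński: every nonempty countable metric space without isolated points is
homeomorphic to ℚ (with the metric inherited from ℝ). -/
theorem countable_metric_no_isolated_homeo_rat
    (M : Type*) [MetricSpace M] [Countable M] [Nonempty M]
    (h : ∀ x : M, ¬ IsOpen ({x} : Set M)) :
    Nonempty (M ≃ₜ ℚ) := by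
  classical
  obtain ⟨u, hu⟩ := exists_surjective_nat M
  obtain ⟨A, hAnil, hAcn, hAun, hAdisj, hAdiam⟩ := sier_scheme h u hu
  -- children are contained in parents
  have hAsub : ∀ (k : ℕ) s, A (k :: s) ⊆ A s := by
    intro k s
    rw [← hAun s]
    exact Set.subset_iUnion (fun k => A (k :: s)) k
  -- uniqueness of cells
  have huniq : ∀ s t : List ℕ, s.length = t.length → ∀ x : M, x ∈ A s → x ∈ A t → s = t := by
    intro s
    induction s with
    | nil => intro t ht x _ _; exact (List.length_eq_zero_iff.mp ht.symm).symm
    | cons k s ih =>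
      intro t ht x hxs hxt
      match t with
      | [] => simp at ht
      | l :: t' =>
        simp only [List.length_cons, Nat.succ_inj] at ht
        have hst : s = t' := ih t' ht x (hAsub k s hxs) (hAsub l t' hxt)
        subst hst
        by_cases hkl : k = l
        · rw [hkl]
        · exact absurd (Set.mem_inter hxs hxt)
            (Set.disjoint_iff_inter_eq_empty.mp (hAdisj s k l hkl) ▸ Set.notMem_empty x)
  -- branches
  have hbranch : ∀ (x : M) (n : ℕ), ∃ s : List ℕ, s.length = n ∧ x ∈ A s := by
    intro x n
    induction n with
    | zero => exact ⟨[], rfl, hAnil ▸ Set.mem_univ x⟩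
    | succ m ih =>
      obtain ⟨s, hslen, hxs⟩ := ih
      rw [← hAun s] at hxs
      obtain ⟨k, hk⟩ := Set.mem_iUnion.mp hxs
      exact ⟨k :: s, by simp [hslen], hk⟩
  choose bs hbslen hbsmem using hbranch
  have hbseq : ∀ (x : M) (s : List ℕ), x ∈ A s → bs x s.length = s := by
    intro x s hxs
    exact huniq _ s (hbslen x s.length) x (hbsmem x s.length) hxs
  have hchain : ∀ (x : M) (n : ℕ), ∃ k : ℕ, bs x (n+1) = k :: bs x n := by
    intro x n
    have hxs : x ∈ A (bs x n) := hbsmem x n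
    rw [← hAun (bs x n)] at hxs
    obtain ⟨k, hk⟩ := Set.mem_iUnion.mp hxs
    refine ⟨k, ?_⟩
    have : (k :: bs x n).length = n + 1 := by simp [hbslen]
    rw [← this]
    exact hbseq x _ hk
  -- the map
  set f : M → ℝ := fun x => ⨆ n : ℕ, (sierE (bs x n)).1 with hf
  have hbdd : ∀ x : M, BddAbove (Set.range fun n : ℕ => (sierE (bs x n)).1) := by
    intro x
    refine ⟨1, ?_⟩
    rintro v ⟨n, rfl⟩
    have hb := sierE_basic (bs x n)
    linarith [hb.1, hb.2.1, hb.2.2.1]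
  have hmono : ∀ x : M, Monotone (fun n : ℕ => (sierE (bs x n)).1) := by
    intro x
    apply monotone_nat_of_le_succ
    intro n
    obtain ⟨k, hk⟩ := hchain x n
    rw [hk]
    exact (sierE_child k (bs x n)).1.le
  have hbanti : ∀ x : M, Antitone (fun n : ℕ => (sierE (bs x n)).2) := by
    intro x
    apply antitone_nat_of_succ_le
    intro n
    obtain ⟨k, hk⟩ := hchain x n
    rw [hk]
    exact (sierE_child k (bs x n)).2.2.le
  have hfmem : ∀ (x : M) (n : ℕ), (sierE (bs x n)).1 ≤ f x ∧ f x ≤ (sierE (bs x n)).2 := by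
    intro x n
    constructor
    · exact le_ciSup (hbdd x) n
    · apply ciSup_le
      intro m
      rcases le_total m n with hmn | hmn
      · exact le_trans (hmono x hmn) (sierE_basic (bs x n)).2.1.le
      · exact le_trans (sierE_basic (bs x m)).2.1.le (hbanti x hmn)
  have hfopen : ∀ (x : M) (n : ℕ), f x ∈ Set.Ioo (sierE (bs x n)).1 (sierE (bs x n)).2 := by
    intro x n
    obtain ⟨k, hk⟩ := hchain x n
    obtain ⟨h1, h2⟩ := hfmem x (n+1)
    rw [hk] at h1 h2
    have hc := sierE_child k (bs x n)
    exact ⟨lt_of_lt_of_le hc.1 h1, lt_of_le_of_lt h2 hc.2.2⟩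
  have hfopen' : ∀ (x : M) (s : List ℕ), x ∈ A s → f x ∈ Set.Ioo (sierE s).1 (sierE s).2 := by
    intro x s hxs
    have := hfopen x s.length
    rwa [hbseq x s hxs] at this
  -- disjointness of the Ioo's
  have hIoo : ∀ s t : List ℕ, s.length = t.length → s ≠ t →
      Disjoint (Set.Ioo (sierE s).1 (sierE s).2) (Set.Ioo (sierE t).1 (sierE t).2) := by
    have hIooSub : ∀ (k : ℕ) (s : List ℕ),
        Set.Ioo (sierE (k::s)).1 (sierE (k::s)).2 ⊆ Set.Ioo (sierE s).1 (sierE s).2 := by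
      intro k s z hz
      have hc := sierE_child k s
      exact ⟨hc.1.trans hz.1, hz.2.trans hc.2.2⟩
    have hsib : ∀ (k l : ℕ) (s : List ℕ), k ≠ l →
        Disjoint (Set.Ioo (sierE (k::s)).1 (sierE (k::s)).2)
          (Set.Ioo (sierE (l::s)).1 (sierE (l::s)).2) := by
      have base : ∀ (k l : ℕ) (s : List ℕ), sierZ k < sierZ l →
          Disjoint (Set.Ioo (sierE (k::s)).1 (sierE (k::s)).2)
            (Set.Ioo (sierE (l::s)).1 (sierE (l::s)).2) := by
        intro k l s hkl
        rw [Set.disjoint_left]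
        intro z hz1 hz2
        have := sierE_sib s hkl
        exact absurd (hz1.2.trans_le (this.trans hz2.1.le)) (lt_irrefl z)
      intro k l s hkl
      rcases lt_or_gt_of_ne (fun hh => hkl (sierZ_inj hh)) with hc | hc
      · exact base k l s hc
      · exact (base l k s hc).symm
    intro s
    induction s with
    | nil => intro t ht hne; exact absurd (List.length_eq_zero_iff.mp ht.symm).symm hne
    | cons k s ih =>
      intro t ht hne
      match t with
      | [] => simp at ht
      | l :: t' =>
        simp only [List.length_cons, Nat.succ_inj] at ht
        by_cases hst : s = t'
        · subst hst
          have hkl : k ≠ l := fun hh => hne (by rw [hh])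
          exact hsib k l s hkl
        · exact Set.disjoint_of_subset (hIooSub k s) (hIooSub l t') (ih t' ht hst)
  -- injectivity
  -- small scales
  have hsmall : ∀ ε : ℝ, 0 < ε → ∃ n : ℕ, ((1:ℝ)/2)^n < ε := by
    intro ε hε
    obtain ⟨n, hn⟩ := exists_pow_lt_of_lt_one hε (by norm_num : (1:ℝ)/2 < 1)
    exact ⟨n, hn⟩
  have hdiam : ∀ (x y : M) (n : ℕ), bs x (n+1) = bs y (n+1) → dist x y ≤ (1/2)^n := by
    intro x y n hxy
    obtain ⟨k, hk⟩ := hchain x n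
    have hx : x ∈ A (k :: bs x n) := hk ▸ hbsmem x (n+1)
    have hy : y ∈ A (k :: bs x n) := by
      have := hbsmem y (n+1)
      rw [← hxy, hk] at this
      exact this
    have := hAdiam (bs x n) k x hx y hy
    rwa [hbslen x n] at this
  have hinj : Function.Injective f := by
    intro x y hxy
    have hcells : ∀ n : ℕ, bs x n = bs y n := by
      intro n
      by_contra hne
      exact Set.disjoint_left.mp
        (hIoo (bs x n) (bs y n) ((hbslen x n).trans (hbslen y n).symm) hne)
        (hfopen x n) (hxy ▸ hfopen y n)
    have hdle : ∀ n : ℕ, dist x y ≤ (1/2)^n := fun n => hdiam x y n (hcells (n+1))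
    by_contra hne
    obtain ⟨n, hn⟩ := hsmall (dist x y) (dist_pos.mpr hne)
    exact absurd (hdle n) (not_le.mpr hn)
  -- embedding
  have hpowsucc : ∀ n : ℕ, ((1:ℝ)/2)^(n+1) ≤ ((1:ℝ)/2)^n := by
    intro n
    have hp : (0:ℝ) < ((1:ℝ)/2)^n := by positivity
    rw [pow_succ]
    nlinarith
  have hcontf : Continuous f := by
    rw [Metric.continuous_iff]
    intro x ε hε
    obtain ⟨n, hn⟩ := hsmall ε hε
    obtain ⟨δ, hδ, hball⟩ := Metric.isOpen_iff.mp (hAcn (bs x (n+1))).1.isOpen x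
      (hbsmem x (n+1))
    refine ⟨δ, hδ, ?_⟩
    intro y hy
    have hyA : y ∈ A (bs x (n+1)) := hball (Metric.mem_ball.mpr hy)
    have hfy := hfopen' y _ hyA
    have hfx := hfopen x (n+1)
    have hlen := sierE_basic (bs x (n+1))
    rw [hbslen x (n+1)] at hlen
    have hb := hlen.2.2.2
    have h1 := hpowsucc n
    rw [Real.dist_eq]
    rw [abs_sub_lt_iff]
    constructor
    · have := hfy.2; have := hfx.1; linarith [hfy.1, hfx.2]
    · have := hfy.1; have := hfx.2; linarith
  have hemb : IsEmbedding f := by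
    refine ⟨isInducing_iff_nhds.mpr fun x => le_antisymm ((hcontf.tendsto x).le_comap) ?_, hinj⟩
    intro U hU
    obtain ⟨ε, hε, hballU⟩ := Metric.mem_nhds_iff.mp hU
    obtain ⟨n, hn⟩ := hsmall ε hε
    refine Filter.mem_comap.mpr ⟨Set.Ioo (sierE (bs x (n+1))).1 (sierE (bs x (n+1))).2,
      isOpen_Ioo.mem_nhds (hfopen x (n+1)), ?_⟩
    intro y hy
    have hyA : bs y (n+1) = bs x (n+1) := by
      by_contra hne
      exact Set.disjoint_left.mp
        (hIoo (bs y (n+1)) (bs x (n+1)) ((hbslen y (n+1)).trans (hbslen x (n+1)).symm) hne)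
        (hfopen y (n+1)) hy
    have := hdiam y x n (hyA.trans (rfl))
    exact hballU (Metric.mem_ball.mpr (lt_of_le_of_lt this hn))
  -- two-sided approximation
  have hside : ∀ (x : M) (ε : ℝ), 0 < ε →
      (∃ y : M, f y < f x ∧ f x - f y < ε) ∧ (∃ y : M, f x < f y ∧ f y - f x < ε) := by
    intro x ε hε
    obtain ⟨n, hn⟩ := hsmall ε hε
    obtain ⟨k, hk⟩ := hchain x n
    have hfx : f x ∈ Set.Ioo (sierE (k :: bs x n)).1 (sierE (k :: bs x n)).2 := by
      have := hfopen x (n+1); rwa [hk] at this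
    have hparent := sierE_basic (bs x n)
    have hplen : (sierE (bs x n)).2 - (sierE (bs x n)).1 ≤ (1/2)^n := by
      have := hparent.2.2.2; rwa [hbslen x n] at this
    constructor
    · obtain ⟨k', hk'⟩ := sierZ_surj (sierZ k - 1)
      obtain ⟨y, hy⟩ := (hAcn (k' :: bs x n)).2
      have hfy := hfopen' y _ hy
      have hsib : (sierE (k' :: bs x n)).2 ≤ (sierE (k :: bs x n)).1 :=
        sierE_sib (bs x n) (by omega)
      have hchild := sierE_child k' (bs x n)
      have hchild2 := sierE_child k (bs x n)
      refine ⟨y, by linarith [hfy.2, hfx.1], ?_⟩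
      have h1 : (sierE (bs x n)).1 < f y := lt_trans hchild.1 hfy.1
      have h2 : f x < (sierE (bs x n)).2 := lt_trans hfx.2 hchild2.2.2
      linarith
    · obtain ⟨k', hk'⟩ := sierZ_surj (sierZ k + 1)
      obtain ⟨y, hy⟩ := (hAcn (k' :: bs x n)).2
      have hfy := hfopen' y _ hy
      have hsib : (sierE (k :: bs x n)).2 ≤ (sierE (k' :: bs x n)).1 :=
        sierE_sib (bs x n) (by omega)
      have hchild := sierE_child k' (bs x n)
      have hchild2 := sierE_child k (bs x n)
      refine ⟨y, by linarith [hfy.1, hfx.2], ?_⟩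
      have h1 : (sierE (bs x n)).1 < f x := lt_trans hchild2.1 hfx.1
      have h2 : f y < (sierE (bs x n)).2 := lt_trans hfy.2 hchild.2.2
      linarith
  -- the range
  set S : Set ℝ := Set.range f with hS
  haveI : Countable ↥S := (Set.countable_range f).to_subtype
  haveI : Nonempty ↥S := (Set.range_nonempty f).to_subtype
  haveI hdo : DenselyOrdered ↥S := by
    constructor
    rintro ⟨av, hav⟩ ⟨bv, x, rfl⟩ hab
    change av < f x at hab
    obtain ⟨⟨y, hy1, hy2⟩, -⟩ := hside x (f x - av) (by linarith)
    exact ⟨⟨f y, Set.mem_range_self y⟩, Subtype.mk_lt_mk.mpr (by linarith),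
      Subtype.mk_lt_mk.mpr (by linarith)⟩
  haveI : NoMinOrder ↥S := by
    constructor
    rintro ⟨av, x, rfl⟩
    obtain ⟨⟨y, hy1, -⟩, -⟩ := hside x 1 one_pos
    exact ⟨⟨f y, Set.mem_range_self y⟩, Subtype.mk_lt_mk.mpr hy1⟩
  haveI : NoMaxOrder ↥S := by
    constructor
    rintro ⟨av, x, rfl⟩
    obtain ⟨-, ⟨y, hy1, -⟩⟩ := hside x 1 one_pos
    exact ⟨⟨f y, Set.mem_range_self y⟩, Subtype.mk_lt_mk.mpr hy1⟩
  obtain ⟨φ⟩ := Order.iso_of_countable_dense ↥S ℚ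
  -- φ is a homeomorphism
  have hcont1 : Continuous (φ : ↥S → ℚ) := by
    rw [Metric.continuous_iff]
    intro s₀ ε hε
    obtain ⟨q₁, hq₁a, hq₁b⟩ := exists_rat_btwn (show ((φ s₀ : ℚ) : ℝ) - ε < ((φ s₀ : ℚ) : ℝ) by linarith)
    obtain ⟨q₂, hq₂a, hq₂b⟩ := exists_rat_btwn (show ((φ s₀ : ℚ) : ℝ) < ((φ s₀ : ℚ) : ℝ) + ε by linarith)
    have hq₁ : q₁ < φ s₀ := by exact_mod_cast hq₁b
    have hq₂ : φ s₀ < q₂ := by exact_mod_cast hq₂a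
    set u : ↥S := φ.symm q₁ with hu
    set v : ↥S := φ.symm q₂ with hv
    have hus : u < s₀ := by
      rw [hu, ← φ.symm_apply_apply s₀]
      exact φ.symm.strictMono hq₁
    have hvs : s₀ < v := by
      rw [hv, ← φ.symm_apply_apply s₀]
      exact φ.symm.strictMono hq₂
    have husr : (u : ℝ) < (s₀ : ℝ) := hus
    have hvsr : (s₀ : ℝ) < (v : ℝ) := hvs
    refine ⟨min ((s₀:ℝ) - u) ((v:ℝ) - s₀), by simp [husr, hvsr], ?_⟩
    intro a ha
    rw [Subtype.dist_eq, Real.dist_eq, abs_sub_lt_iff] at ha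
    have ha1 : (u : ℝ) < (a : ℝ) := by
      have := ha.2.trans_le (min_le_left _ _); linarith
    have ha2 : (a : ℝ) < (v : ℝ) := by
      have := ha.1.trans_le (min_le_right _ _); linarith
    have hφa1 : q₁ < φ a := by
      have : u < a := ha1
      have := φ.strictMono this
      rwa [hu, φ.apply_symm_apply] at this
    have hφa2 : φ a < q₂ := by
      have : a < v := ha2
      have := φ.strictMono this
      rwa [hv, φ.apply_symm_apply] at this
    rw [Rat.dist_eq, abs_sub_lt_iff]
    have c1 : ((q₁:ℚ):ℝ) < ((φ a : ℚ):ℝ) := by exact_mod_cast hφa1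
    have c2 : ((φ a : ℚ):ℝ) < ((q₂:ℚ):ℝ) := by exact_mod_cast hφa2
    constructor <;> linarith
  have hcont2 : Continuous (φ.symm : ℚ → ↥S) := by
    rw [Metric.continuous_iff]
    intro q₀ ε hε
    obtain ⟨x, hx⟩ := (φ.symm q₀).2
    obtain ⟨⟨y, hy1, hy2⟩, ⟨y', hy1', hy2'⟩⟩ := hside x ε hε
    set u : ↥S := ⟨f y, Set.mem_range_self y⟩ with hu
    set v : ↥S := ⟨f y', Set.mem_range_self y'⟩ with hv
    have hus : u < φ.symm q₀ := by
      show (u : ℝ) < ((φ.symm q₀ : ↥S) : ℝ)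
      rw [← hx]; exact hy1
    have hvs : φ.symm q₀ < v := by
      show ((φ.symm q₀ : ↥S) : ℝ) < (v : ℝ)
      rw [← hx]; exact hy1'
    have hq₁ : φ u < q₀ := by
      have := φ.strictMono hus
      rwa [φ.apply_symm_apply] at this
    have hq₂ : q₀ < φ v := by
      have := φ.strictMono hvs
      rwa [φ.apply_symm_apply] at this
    have hq₁r : ((φ u : ℚ) : ℝ) < (q₀ : ℝ) := by exact_mod_cast hq₁
    have hq₂r : ((q₀ : ℚ) : ℝ) < ((φ v : ℚ) : ℝ) := by exact_mod_cast hq₂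
    refine ⟨min ((q₀:ℝ) - (φ u : ℚ)) (((φ v : ℚ):ℝ) - q₀), by simp [hq₁r, hq₂r], ?_⟩
    intro q hq
    rw [Rat.dist_eq, abs_sub_lt_iff] at hq
    have hq1 : ((φ u : ℚ) : ℝ) < (q : ℝ) := by
      have := hq.2.trans_le (min_le_left _ _); linarith
    have hq2 : (q : ℝ) < ((φ v : ℚ) : ℝ) := by
      have := hq.1.trans_le (min_le_right _ _); linarith
    have hmono1 : u < φ.symm q := by
      have : φ u < q := by exact_mod_cast hq1
      have := φ.symm.strictMono this
      rwa [φ.symm_apply_apply] at this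
    have hmono2 : φ.symm q < v := by
      have : q < φ v := by exact_mod_cast hq2
      have := φ.symm.strictMono this
      rwa [φ.symm_apply_apply] at this
    have hr1 : (u : ℝ) < ((φ.symm q : ↥S) : ℝ) := hmono1
    have hr2 : ((φ.symm q : ↥S) : ℝ) < (v : ℝ) := hmono2
    rw [Subtype.dist_eq, Real.dist_eq, abs_sub_lt_iff, ← hx]
    constructor
    · simp only [hu] at hr1
      simp only [hv] at hr2
      linarith
    · simp only [hu] at hr1
      linarith
  exact ⟨hemb.toHomeomorph.trans ⟨φ.toEquiv, hcont1, hcont2⟩⟩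
end

section
/- If X and Y are countable, compact subsets of a complete metric space, then X is homeomorphic to a subset of Y or Y is homeomorphic to a subset of X. -/
open Set Metric Topology Ordinal Filter Function Cardinal
open scoped Cardinal

universe u

section CBD
variable {M : Type u} [MetricSpace M]

/-- Transfinite Cantor–Bendixson derivative of a set. -/
noncomputable def CBD (K : Set M) (o : Ordinal.{u}) : Set M :=
  Ordinal.limitRecOn o K (fun _ S => derivedSet S)
    (fun o _ ih => ⋂ b : Set.Iio o, ih b.1 b.2)

@[simp] lemma CBD_zero (K : Set M) : CBD K 0 = K := Ordinal.limitRecOn_zero ..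

lemma CBD_succ (K : Set M) (o : Ordinal.{u}) :
    CBD K (o + 1) = derivedSet (CBD K o) := by
  rw [← Order.succ_eq_add_one]
  exact Ordinal.limitRecOn_succ ..

lemma CBD_limit (K : Set M) {o : Ordinal.{u}} (h : Order.IsSuccLimit o) :
    CBD K o = ⋂ b : Set.Iio o, CBD K b.1 := Ordinal.limitRecOn_limit _ _ _ _ h

lemma isClosed_CBD {K : Set M} (hK : IsClosed K) (o : Ordinal.{u}) :
    IsClosed (CBD K o) := by
  induction o using Ordinal.induction with
  | _ o IH =>
    rcases Ordinal.zero_or_succ_or_isSuccLimit o with rfl | ⟨a, rfl⟩ | hlim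
    · simpa using hK
    · rw [← Ordinal.add_one_eq_succ, CBD_succ]; exact isClosed_derivedSet _
    · rw [CBD_limit K hlim]
      exact isClosed_iInter fun b => IH b.1 b.2

lemma CBD_succ_subset {K : Set M} (hK : IsClosed K) (o : Ordinal.{u}) :
    CBD K (o + 1) ⊆ CBD K o := by
  rw [CBD_succ]
  exact (derivedSet_subset_closure _).trans (isClosed_CBD hK o).closure_subset

lemma CBD_anti {K : Set M} (hK : IsClosed K) :
    ∀ {o o' : Ordinal.{u}}, o ≤ o' → CBD K o' ⊆ CBD K o := by
  intro o o' h
  induction o' using Ordinal.induction with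
  | _ o' IH =>
    rcases eq_or_lt_of_le h with rfl | hlt
    · rfl
    rcases Ordinal.zero_or_succ_or_isSuccLimit o' with rfl | ⟨a, rfl⟩ | hlim
    · exact absurd hlt (not_lt_of_ge (zero_le : (0 : Ordinal) ≤ o))
    · have h1 : o ≤ a := Order.lt_succ_iff.mp hlt
      rw [← Ordinal.add_one_eq_succ]
      exact (CBD_succ_subset hK a).trans
        (IH a (by rw [← Ordinal.add_one_eq_succ]; exact lt_add_one a) h1)
    · rw [CBD_limit K hlim]
      exact iInter_subset_of_subset ⟨o, hlt⟩ (by rfl)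

lemma CBD_subset {K : Set M} (hK : IsClosed K) (o : Ordinal.{u}) :
    CBD K o ⊆ K := by simpa using CBD_anti hK (zero_le : (0 : Ordinal) ≤ o)
end CBD



section B
variable {M : Type u} [MetricSpace M]

/-- every neighborhood of an accumulation point meets the set in an infinite set -/
lemma AccPt.infinite_inter {x : M} {S U : Set M} (h : AccPt x (𝓟 S)) (hU : U ∈ 𝓝 x) :
    (S ∩ U).Infinite := by
  intro hfin
  have hF : IsClosed ((S ∩ U) \ {x}) := ((hfin.diff).isClosed)
  have hx : x ∈ (((S ∩ U) \ {x})ᶜ) := by simp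
  rw [accPt_iff_nhds] at h
  obtain ⟨y, hy, hyx⟩ := h (U ∩ ((S ∩ U) \ {x})ᶜ)
    (Filter.inter_mem hU (hF.isOpen_compl.mem_nhds hx))
  exact hy.1.2 ⟨⟨hy.2, hy.1.1⟩, hyx⟩

lemma derivedSet_inter_open {S U : Set M} (hU : IsOpen U) :
    derivedSet S ∩ U ⊆ derivedSet (S ∩ U) := by
  intro x ⟨hxd, hxU⟩
  rw [mem_derivedSet, accPt_iff_nhds] at hxd ⊢
  intro V hV
  obtain ⟨y, hy, hyx⟩ := hxd (V ∩ U) (Filter.inter_mem hV (hU.mem_nhds hxU))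
  exact ⟨y, ⟨hy.1.1, hy.2, hy.1.2⟩, hyx⟩

/-- Cantor–Bendixson derivatives of a relatively clopen compact subset. -/
lemma CBD_inter {K : Set M} (hK : IsClosed K) {U : Set M} (hU : IsOpen U)
    (hC : IsClosed (K ∩ U)) (o : Ordinal.{u}) :
    CBD (K ∩ U) o = CBD K o ∩ U := by
  induction o using Ordinal.induction with
  | _ o IH =>
    rcases Ordinal.zero_or_succ_or_isSuccLimit o with rfl | ⟨a, rfl⟩ | hlim
    · simp
    · rw [← Ordinal.add_one_eq_succ, CBD_succ, CBD_succ,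
        IH a (by rw [← Ordinal.add_one_eq_succ]; exact lt_add_one a)]
      apply Subset.antisymm
      · intro x hx
        refine ⟨derivedSet_mono _ _ inter_subset_left hx, ?_⟩
        have h1 : CBD K a ∩ U ⊆ K ∩ U := inter_subset_inter_left _ (CBD_subset hK a)
        have := (derivedSet_mono _ _ h1 hx)
        have h2 : derivedSet (K ∩ U) ⊆ K ∩ U := (derivedSet_subset_closure _).trans
          hC.closure_subset
        exact (h2 this).2
      · exact derivedSet_inter_open hU
    · rw [CBD_limit _ hlim, CBD_limit _ hlim]
      have h0 : (0 : Ordinal) ∈ Set.Iio o := hlim.pos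
      apply Subset.antisymm
      · intro x hx
        have hx0 := mem_iInter.mp hx ⟨0, h0⟩
        rw [IH 0 hlim.pos] at hx0
        refine ⟨mem_iInter.mpr fun b => ?_, hx0.2⟩
        have := mem_iInter.mp hx b
        rw [IH b.1 b.2] at this
        exact this.1
      · intro x hx
        exact mem_iInter.mpr fun b => (IH b.1 b.2).symm ▸ ⟨mem_iInter.mp hx.1 b, hx.2⟩

/-- a set whose derived set is empty, inside a compact set, is finite -/
lemma finite_of_derivedSet_empty {K S : Set M} (hK : IsCompact K) (hS : S ⊆ K)
    (h : derivedSet S = ∅) : S.Finite := by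
  by_contra hinf
  obtain ⟨x, -, hx⟩ := Set.Infinite.exists_accPt_of_subset_isCompact
    (hinf) hK hS
  have : x ∈ derivedSet S := hx
  simp [h] at this

/-- scatteredness: in a complete space, iterating the CB derivative of a countable
closed set reaches the empty set -/
lemma exists_CBD_empty [CompleteSpace M] {K : Set M} (hKc : K.Countable) (hK : IsClosed K) :
    ∃ o : Ordinal.{u}, CBD K o = ∅ := by
  have hfix : ∃ o : Ordinal.{u}, CBD K (o + 1) = CBD K o := by
    by_contra hne
    push_neg at hne
    have hinj : Function.Injective (CBD K) := by
      have hstrict : ∀ {a b : Ordinal.{u}}, a < b → CBD K b ⊂ CBD K a := by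
        intro a b hab
        refine ssubset_of_subset_of_ssubset (CBD_anti hK (Order.add_one_le_of_lt hab)) ?_
        exact (CBD_succ_subset hK a).ssubset_of_ne (hne a)
      intro a b hab
      by_contra hne'
      rcases lt_or_gt_of_ne hne' with h | h
      · exact (hstrict h).ne hab.symm
      · exact (hstrict h).ne hab
    exact not_injective_of_ordinal (CBD K) hinj
  obtain ⟨o, ho⟩ := hfix
  refine ⟨o, ?_⟩
  by_contra hne
  have hperf : Perfect (CBD K o) := by
    rw [perfect_iff_eq_derivedSet]
    rw [CBD_succ] at ho
    exact ho.symm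
  obtain ⟨f, hfr, -, hfi⟩ := hperf.exists_nat_bool_injection (nonempty_iff_ne_empty.mpr hne)
  have hsub : Set.range f ⊆ K := hfr.trans (CBD_subset hK o)
  have hcnt : (Set.range f).Countable := hKc.mono hsub
  haveI := hcnt.to_subtype
  have : Countable (ℕ → Bool) := Countable.of_equiv _ (Equiv.ofInjective f hfi).symm
  have hle : Cardinal.mk (ℕ → Bool) ≤ Cardinal.aleph0 := Cardinal.mk_le_aleph0
  rw [← Cardinal.power_def, Cardinal.mk_bool, Cardinal.mk_nat] at hle
  exact absurd hle (not_le.mpr (Cardinal.cantor Cardinal.aleph0))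
end B
section C
variable {M : Type u} [MetricSpace M]

/-- every nonempty compact countable set has a well-defined "top" CB level -/
lemma exists_top [CompleteSpace M] {K : Set M} (hK : IsCompact K) (hKc : K.Countable)
    (hne : K.Nonempty) :
    ∃ β : Ordinal.{u}, CBD K β ≠ ∅ ∧ CBD K (β + 1) = ∅ := by
  have hcl := hK.isClosed
  obtain ⟨o₀, ho₀⟩ := exists_CBD_empty hKc hcl
  set S : Set Ordinal.{u} := {o | CBD K o = ∅} with hS
  have hSne : S.Nonempty := ⟨o₀, ho₀⟩
  set ρ := sInf S with hρ
  have hρS : ρ ∈ S := csInf_mem hSne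
  have hlt : ∀ b < ρ, CBD K b ≠ ∅ := fun b hb hbe => (not_le.mpr hb) (csInf_le' hbe)
  rcases Ordinal.zero_or_succ_or_isSuccLimit ρ with h0 | ⟨a, ha⟩ | hlim
  · rw [h0] at hρS
    simp only [hS, mem_setOf_eq, CBD_zero] at hρS
    exact absurd hρS (nonempty_iff_ne_empty.mp hne)
  · refine ⟨a, hlt a ?_, ?_⟩
    · rw [← ha]; exact Order.lt_succ a
    · rw [Ordinal.add_one_eq_succ, ha]; exact hρS
  · exfalso
    have hρpos : (0 : Ordinal) < ρ := hlim.pos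
    have : CBD K ρ = ⋂ b : Set.Iio ρ, CBD K b.1 := CBD_limit K hlim
    have hnonempty : (⋂ b : Set.Iio ρ, CBD K b.1).Nonempty := by
      haveI : Nonempty (Set.Iio ρ) := ⟨⟨0, hρpos⟩⟩
      apply IsCompact.nonempty_iInter_of_directed_nonempty_isCompact_isClosed
      · intro a b
        rcases le_total a.1 b.1 with h | h
        · exact ⟨b, CBD_anti hcl h, subset_rfl⟩
        · exact ⟨a, subset_rfl, CBD_anti hcl h⟩
      · exact fun b => nonempty_iff_ne_empty.mpr (hlt b.1 b.2)
      · exact fun b => hK.of_isClosed_subset (isClosed_CBD hcl b.1) (CBD_subset hcl b.1)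
      · exact fun b => isClosed_CBD hcl b.1
    rw [← this] at hnonempty
    exact nonempty_iff_ne_empty.mp hnonempty hρS

/-- for a countable set we can choose radii avoiding all "spheres" -/
lemma exists_good_radius {K : Set M} (hKc : K.Countable) (x : M) {l u : ℝ} (hlu : l < u) :
    ∃ r, r ∈ Set.Ioo l u ∧ ∀ y ∈ K, dist y x ≠ r := by
  by_contra h
  push_neg at h
  have hsub : Set.Ioo l u ⊆ (fun y => dist y x) '' K := by
    intro r hr
    obtain ⟨y, hy, hyr⟩ := h r hr
    exact ⟨y, hy, hyr⟩
  have hcnt : (Set.Ioo l u).Countable := (hKc.image _).mono hsub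
  have := Cardinal.mk_le_aleph0_iff.mpr hcnt.to_subtype
  rw [Cardinal.mk_Ioo_real hlu] at this
  exact absurd this (not_le.mpr (Cardinal.aleph0_lt_continuum))

/-- clopen compact piece of a compact countable set around a point -/
lemma exists_clopen_piece {K : Set M} (hK : IsCompact K) (hKc : K.Countable) (x : M)
    {a : ℝ} (ha : 0 < a) :
    ∃ r, 0 < r ∧ r < a ∧ IsCompact (K ∩ ball x r) ∧ IsCompact (K ∩ (closedBall x r)ᶜ) ∧
      K ∩ ball x r = K ∩ closedBall x r := by
  obtain ⟨r, hr, hsphere⟩ := exists_good_radius hKc x ha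
  have heq : K ∩ ball x r = K ∩ closedBall x r := by
    apply Subset.antisymm (inter_subset_inter_right _ ball_subset_closedBall)
    rintro y ⟨hyK, hyb⟩
    exact ⟨hyK, lt_of_le_of_ne hyb (hsphere y hyK)⟩
  have heq2 : K ∩ (closedBall x r)ᶜ = K ∩ (ball x r)ᶜ := by
    apply Subset.antisymm (inter_subset_inter_right _ (compl_subset_compl.mpr ball_subset_closedBall))
    rintro y ⟨hyK, hyb⟩
    refine ⟨hyK, fun hyc => hyb ?_⟩
    exact lt_of_le_of_ne hyc (hsphere y hyK)
  refine ⟨r, hr.1, hr.2, ?_, ?_, heq⟩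
  · rw [heq]; exact hK.inter_right isClosed_closedBall
  · rw [heq2]; exact hK.inter_right isOpen_ball.isClosed_compl
end C
section D
variable {M : Type u} [MetricSpace M]

lemma continuousWithinAt_piece {K A : Set M} {U : Set M} (hU : IsOpen U)
    (hA : A = K ∩ U) {f g : M → M} (hf : ContinuousOn f A) (hfg : ∀ y ∈ A, g y = f y)
    {x : M} (hx : x ∈ A) : ContinuousWithinAt g K x := by
  have hxU : x ∈ U := by rw [hA] at hx; exact hx.2
  have hmem : U ∈ 𝓝 x := hU.mem_nhds hxU
  have h1 : 𝓝[K] x = 𝓝[A] x := by rw [hA]; exact (nhdsWithin_restrict' K hmem).symm ▸ rfl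
  have h2 : ContinuousWithinAt f A x := hf x hx
  have h3 : ContinuousWithinAt g A x := by
    apply h2.congr hfg (hfg x hx)
  unfold ContinuousWithinAt
  rw [h1]
  exact h3

/-- gluing two embeddings on a clopen partition -/
lemma glue_two {K K₁ K₂ L₁ L₂ U₁ U₂ : Set M}
    (hU₁ : IsOpen U₁) (hU₂ : IsOpen U₂)
    (hK₁ : K₁ = K ∩ U₁) (hK₂ : K₂ = K ∩ U₂)
    (hcover : K = K₁ ∪ K₂) (hdisj : K₁ ∩ K₂ = ∅) (hLdisj : L₁ ∩ L₂ = ∅)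
    {f₁ f₂ : M → M}
    (hf₁ : ContinuousOn f₁ K₁ ∧ Set.InjOn f₁ K₁ ∧ f₁ '' K₁ ⊆ L₁)
    (hf₂ : ContinuousOn f₂ K₂ ∧ Set.InjOn f₂ K₂ ∧ f₂ '' K₂ ⊆ L₂) :
    ∃ f : M → M, ContinuousOn f K ∧ Set.InjOn f K ∧ f '' K ⊆ L₁ ∪ L₂ := by
  classical
  refine ⟨fun x => if x ∈ K₁ then f₁ x else f₂ x, ?_, ?_, ?_⟩
  · intro x hx
    rcases (hcover ▸ hx : x ∈ K₁ ∪ K₂) with h | h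
    · exact continuousWithinAt_piece hU₁ hK₁ hf₁.1 (fun y hy => if_pos hy) h
    · refine continuousWithinAt_piece hU₂ hK₂ hf₂.1 (fun y hy => ?_) h
      have hy1 : y ∉ K₁ := fun h1 => by
        have : y ∈ K₁ ∩ K₂ := ⟨h1, hy⟩
        rw [hdisj] at this; exact this
      exact if_neg hy1
  · intro x hx y hy hxy
    by_cases hx1 : x ∈ K₁ <;> by_cases hy1 : y ∈ K₁
    · exact hf₁.2.1 hx1 hy1 (by simpa [hx1, hy1] using hxy)
    · exfalso
      have hy2 : y ∈ K₂ := (hcover ▸ hy).resolve_left hy1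
      have h1 : f₁ x ∈ L₁ := hf₁.2.2 ⟨x, hx1, rfl⟩
      have h2 : f₂ y ∈ L₂ := hf₂.2.2 ⟨y, hy2, rfl⟩
      simp only [if_pos hx1, if_neg hy1] at hxy
      have : f₁ x ∈ L₁ ∩ L₂ := ⟨h1, hxy ▸ h2⟩
      rw [hLdisj] at this; exact this
    · exfalso
      have hx2 : x ∈ K₂ := (hcover ▸ hx).resolve_left hx1
      have h1 : f₁ y ∈ L₁ := hf₁.2.2 ⟨y, hy1, rfl⟩
      have h2 : f₂ x ∈ L₂ := hf₂.2.2 ⟨x, hx2, rfl⟩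
      simp only [if_neg hx1, if_pos hy1] at hxy
      have : f₁ y ∈ L₁ ∩ L₂ := ⟨h1, hxy ▸ h2⟩
      rw [hLdisj] at this; exact this
    · have hx2 : x ∈ K₂ := (hcover ▸ hx).resolve_left hx1
      have hy2 : y ∈ K₂ := (hcover ▸ hy).resolve_left hy1
      exact hf₂.2.1 hx2 hy2 (by simpa [hx1, hy1] using hxy)
  · rintro z ⟨x, hx, rfl⟩
    by_cases hx1 : x ∈ K₁
    · simp only [if_pos hx1]; exact Or.inl (hf₁.2.2 ⟨x, hx1, rfl⟩)
    · have hx2 : x ∈ K₂ := (hcover ▸ hx).resolve_left hx1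
      simp only [if_neg hx1]; exact Or.inr (hf₂.2.2 ⟨x, hx2, rfl⟩)
end D
section E
variable {M : Type u} [MetricSpace M]

/-- gluing countably many embeddings on clopen pieces converging to a point -/
lemma glue_seq {K L : Set M} {p q : M} (hp : p ∈ K) (hq : q ∈ L)
    {A U B : ℕ → Set M} (hU : ∀ j, IsOpen (U j)) (hA : ∀ j, A j = K ∩ U j)
    (hAc : ∀ j, IsCompact (A j)) (hdisj : ∀ i j, i ≠ j → A i ∩ A j = ∅)
    (hcover : K ⊆ insert p (⋃ j, A j)) (hpA : ∀ j, p ∉ A j)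
    (hBL : ∀ j, B j ⊆ L) (hBdisj : ∀ i j, i ≠ j → B i ∩ B j = ∅) (hqB : ∀ j, q ∉ B j)
    (hsmall : ∀ ε : ℝ, 0 < ε → ∃ J : ℕ, ∀ j, J ≤ j → B j ⊆ ball q ε)
    {f : ℕ → M → M}
    (hf : ∀ j, ContinuousOn (f j) (A j) ∧ Set.InjOn (f j) (A j) ∧ f j '' A j ⊆ B j) :
    ∃ g : M → M, ContinuousOn g K ∧ Set.InjOn g K ∧ g '' K ⊆ L := by
  classical
  set g : M → M := fun x => if h : ∃ j, x ∈ A j then f (Nat.find h) x else q with hg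
  have hgA : ∀ j, ∀ x ∈ A j, g x = f j x := by
    intro j x hx
    have h : ∃ j', x ∈ A j' := ⟨j, hx⟩
    have hj : Nat.find h = j := by
      by_contra hne
      have : x ∈ A (Nat.find h) ∩ A j := ⟨Nat.find_spec h, hx⟩
      rw [hdisj _ _ hne] at this; exact this
    simp only [hg, dif_pos h, hj]
  have hgq : ∀ x, (¬ ∃ j, x ∈ A j) → g x = q := fun x hx => by
    simp only [hg, dif_neg hx]
  have hgB : ∀ j, ∀ x ∈ A j, g x ∈ B j := fun j x hx =>
    (hgA j x hx) ▸ (hf j).2.2 ⟨x, hx, rfl⟩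
  refine ⟨g, ?_, ?_, ?_⟩
  · intro x hx
    by_cases hxA : ∃ j, x ∈ A j
    · obtain ⟨j, hj⟩ := hxA
      exact continuousWithinAt_piece (hU j) (hA j) (hf j).1 (hgA j) hj
    · rw [ContinuousWithinAt, hgq x hxA, Metric.tendsto_nhds]
      intro ε hε
      obtain ⟨J, hJ⟩ := hsmall ε hε
      set C : Set M := ⋃ j ∈ Finset.range J, A j with hC
      have hCclosed : IsClosed C := by
        apply Set.Finite.isClosed_biUnion (Finset.finite_toSet _)
        exact fun j _ => (hAc j).isClosed
      have hxC : x ∉ C := by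
        simp only [hC, mem_iUnion]
        rintro ⟨j, -, hj⟩
        exact hxA ⟨j, hj⟩
      have hmem : Cᶜ ∈ 𝓝[K] x :=
        mem_nhdsWithin_of_mem_nhds (hCclosed.isOpen_compl.mem_nhds hxC)
      filter_upwards [hmem, self_mem_nhdsWithin] with y hyC hyK
      by_cases hyA : ∃ j, y ∈ A j
      · obtain ⟨j, hj⟩ := hyA
        have hjJ : J ≤ j := by
          by_contra hlt
          exact hyC (by simp only [hC, mem_iUnion]; exact ⟨j, Finset.mem_range.mpr (not_le.mp hlt), hj⟩)
        have : g y ∈ B j := hgB j y hj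
        exact mem_ball.mp (hJ j hjJ this)
      · rw [hgq y hyA]; simpa using hε
  · intro x hx y hy hxy
    by_cases hxA : ∃ j, x ∈ A j <;> by_cases hyA : ∃ j, y ∈ A j
    · obtain ⟨i, hi⟩ := hxA; obtain ⟨j, hj⟩ := hyA
      have hij : i = j := by
        by_contra hne
        have : g x ∈ B i ∩ B j := ⟨hgB i x hi, hxy ▸ hgB j y hj⟩
        rw [hBdisj i j hne] at this; exact this
      subst hij
      exact (hf i).2.1 hi hj (by rw [← hgA i x hi, ← hgA i y hj, hxy])
    · exfalso
      obtain ⟨i, hi⟩ := hxA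
      have : g x ∈ B i := hgB i x hi
      rw [hxy, hgq y hyA] at this
      exact hqB i this
    · exfalso
      obtain ⟨j, hj⟩ := hyA
      have : g y ∈ B j := hgB j y hj
      rw [← hxy, hgq x hxA] at this
      exact hqB j this
    · have hxp : x = p := by
        rcases hcover hx with h | h
        · exact h
        · exact absurd (mem_iUnion.mp h) (by simpa using hxA)
      have hyp : y = p := by
        rcases hcover hy with h | h
        · exact h
        · exact absurd (mem_iUnion.mp h) (by simpa using hyA)
      rw [hxp, hyp]
  · rintro z ⟨x, hx, rfl⟩
    by_cases hxA : ∃ j, x ∈ A j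
    · obtain ⟨j, hj⟩ := hxA
      exact hBL j (hgB j x hj)
    · rw [hgq x hxA]; exact hq
end E
section F
variable {M : Type u} [MetricSpace M]

/-- selecting a small compact relatively-clopen piece near a point of high CB rank,
containing a prescribed number of points of prescribed CB rank -/
lemma exists_target_piece {L : Set M} (hL : IsCompact L) (hLc : L.Countable) {q : M}
    {γ δ : Ordinal.{u}} (hγδ : γ + 1 ≤ δ) (hq : q ∈ CBD L δ) (c : ℕ) {ε : ℝ} (hε : 0 < ε) :
    ∃ B : Set M, IsCompact B ∧ B ⊆ L ∧ B ⊆ ball q ε ∧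
      (∃ ε' : ℝ, 0 < ε' ∧ B ∩ ball q ε' = ∅) ∧
      ∃ T : Finset M, ↑T ⊆ CBD B γ ∧ T.card = c := by
  rcases Nat.eq_zero_or_pos c with rfl | hc
  · exact ⟨∅, isCompact_empty, empty_subset _, empty_subset _,
      ⟨1, one_pos, by simp⟩, ⟨∅, by simp, rfl⟩⟩
  have hq' : q ∈ derivedSet (CBD L γ) := by
    rw [← CBD_succ]; exact CBD_anti hL.isClosed hγδ hq
  have hacc : AccPt q (𝓟 (CBD L γ)) := hq'
  have hinf : ((CBD L γ ∩ ball q ε) \ {q}).Infinite :=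
    (hacc.infinite_inter (ball_mem_nhds q hε)).diff (finite_singleton q)
  obtain ⟨T, hT, hTc⟩ := hinf.exists_subset_card_eq c
  have hTne : T.Nonempty := Finset.card_pos.mp (hTc ▸ hc)
  have hchoice : ∀ t : M, t ∈ T → ∃ r : ℝ,
      0 < r ∧ r < min (dist t q) (ε - dist t q) ∧
      (L ∩ ball t r = L ∩ closedBall t r) ∧ IsCompact (L ∩ ball t r) := by
    intro t ht
    have htq : t ≠ q := by
      have := hT ht; simp only [mem_diff, mem_singleton_iff] at this; exact this.2
    have htb : t ∈ ball q ε := (hT ht).1.2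
    have ha : 0 < min (dist t q) (ε - dist t q) := by
      apply lt_min
      · exact dist_pos.mpr htq
      · have := mem_ball.mp htb; linarith
    obtain ⟨r, hr1, hr2, hr3, -, hr5⟩ := exists_clopen_piece hL hLc t ha
    exact ⟨r, hr1, hr2, hr5, hr5 ▸ hL.inter_right isClosed_closedBall⟩
  choose r hr0 hra hreq hrc using hchoice
  set B : Set M := ⋃ t : {x // x ∈ T}, L ∩ ball t.1 (r t.1 t.2) with hB
  have hBL : B ⊆ L := by
    simp only [hB, iUnion_subset_iff]; exact fun t => inter_subset_left
  refine ⟨B, ?_, hBL, ?_, ?_, T, ?_, hTc⟩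
  · exact isCompact_iUnion fun t => hrc t.1 t.2
  · simp only [hB, iUnion_subset_iff]
    rintro t x ⟨-, hx⟩
    have h1 : dist x t.1 < r t.1 t.2 := mem_ball.mp hx
    have h2 : r t.1 t.2 < ε - dist t.1 q := lt_of_lt_of_le (hra t.1 t.2) (min_le_right _ _)
    have := dist_triangle x t.1 q
    exact mem_ball.mpr (by linarith)
  · refine ⟨Finset.inf' T.attach (Finset.attach_nonempty_iff.mpr hTne)
      (fun t => dist t.1 q - r t.1 t.2), ?_, ?_⟩
    · rw [Finset.lt_inf'_iff]
      intro t _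
      have := lt_of_lt_of_le (hra t.1 t.2) (min_le_left _ _)
      linarith
    · apply eq_empty_iff_forall_notMem.mpr
      rintro x ⟨hx1, hx2⟩
      simp only [hB, mem_iUnion] at hx1
      obtain ⟨t, -, hxt⟩ := hx1
      have h1 : dist x t.1 < r t.1 t.2 := mem_ball.mp hxt
      have h2 : dist x q < dist t.1 q - r t.1 t.2 :=
        lt_of_lt_of_le (mem_ball.mp hx2) (Finset.inf'_le _ (Finset.mem_attach T t))
      have := dist_triangle t.1 x q
      rw [dist_comm t.1 x] at this
      linarith
  · set V : Set M := ⋃ t : {x // x ∈ T}, ball t.1 (r t.1 t.2) with hV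
    have hVopen : IsOpen V := isOpen_iUnion fun t => isOpen_ball
    have hBV : B = L ∩ V := by rw [hB, hV, inter_iUnion]
    have hBclosed : IsClosed B := by
      have : B = ⋃ t : {x // x ∈ T}, L ∩ closedBall t.1 (r t.1 t.2) := by
        rw [hB]; exact iUnion_congr fun t => hreq t.1 t.2
      rw [this]
      exact isClosed_iUnion_of_finite fun t =>
        (hL.inter_right isClosed_closedBall).isClosed
    have := CBD_inter hL.isClosed hVopen (hBV ▸ hBclosed) γ
    rw [← hBV] at this
    rw [this]
    intro t ht
    refine ⟨(hT ht).1.1, ?_⟩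
    simp only [hV, mem_iUnion]
    exact ⟨⟨t, ht⟩, mem_ball_self (hr0 t ht)⟩
end F
section G
variable {M : Type u} [MetricSpace M]

/-- decomposition of a compact countable set into annular clopen pieces around a point -/
lemma exists_decomposition {K : Set M} (hK : IsCompact K) (hKc : K.Countable) (p : M) :
    ∃ (A U : ℕ → Set M), (∀ j, IsOpen (U j)) ∧ (∀ j, A j = K ∩ U j) ∧
      (∀ j, IsCompact (A j)) ∧ (∀ i j, i ≠ j → A i ∩ A j = ∅) ∧
      (K ⊆ insert p (⋃ j, A j)) ∧ (∀ j, p ∉ U j) := by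
  have hgood : ∀ j : ℕ, ∃ r : ℝ, r ∈ Set.Ioo (1/((j:ℝ)+2)) (1/((j:ℝ)+1)) ∧
      ∀ y ∈ K, dist y p ≠ r := by
    intro j
    apply exists_good_radius hKc p
    apply one_div_lt_one_div_of_lt <;> [positivity; linarith]
  choose s hs hsphere using hgood
  have hspos : ∀ j, 0 < s j := fun j => lt_trans (by positivity) (hs j).1
  have hanti : ∀ i j, i < j → s j < s i := by
    intro i j hij
    calc s j < 1/((j:ℝ)+1) := (hs j).2
    _ ≤ 1/((i:ℝ)+2) := by
        apply one_div_le_one_div_of_le (by positivity)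
        have : (i:ℝ) + 1 ≤ j := by exact_mod_cast hij
        linarith
    _ < s i := (hs i).1
  set U : ℕ → Set M := fun j => Nat.rec ((closedBall p (s 0))ᶜ)
    (fun m _ => ball p (s m) ∩ (closedBall p (s (m+1)))ᶜ) j with hU
  have hU0 : U 0 = (closedBall p (s 0))ᶜ := rfl
  have hUsucc : ∀ m, U (m+1) = ball p (s m) ∩ (closedBall p (s (m+1)))ᶜ := fun m => rfl
  have hUopen : ∀ j, IsOpen (U j) := by
    intro j
    cases j with
    | zero => rw [hU0]; exact isClosed_closedBall.isOpen_compl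
    | succ m => rw [hUsucc]; exact isOpen_ball.inter isClosed_closedBall.isOpen_compl
  set A : ℕ → Set M := fun j => K ∩ U j with hA
  have hrange : ∀ j, ∀ x ∈ A j, s j < dist x p ∧ (j ≠ 0 → dist x p < s (j-1)) := by
    intro j x hx
    cases j with
    | zero =>
      refine ⟨?_, fun h => absurd rfl h⟩
      have : x ∉ closedBall p (s 0) := hx.2
      rw [mem_closedBall] at this
      exact lt_of_not_ge this
    | succ m =>
      have h1 : x ∈ ball p (s m) := hx.2.1
      have h2 : x ∉ closedBall p (s (m+1)) := hx.2.2
      rw [mem_ball] at h1; rw [mem_closedBall] at h2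
      exact ⟨lt_of_not_ge h2, fun _ => by simpa using h1⟩
  refine ⟨A, U, hUopen, fun j => rfl, ?_, ?_, ?_, ?_⟩
  · intro j
    cases j with
    | zero =>
      have : A 0 = K ∩ (ball p (s 0))ᶜ := by
        apply Subset.antisymm
        · exact fun x hx => ⟨hx.1, fun hb =>
            hx.2 (mem_closedBall.mpr (le_of_lt (mem_ball.mp hb)))⟩
        · rintro x ⟨hxK, hxb⟩
          refine ⟨hxK, fun hc => hxb ?_⟩
          rw [mem_closedBall] at hc
          exact mem_ball.mpr (lt_of_le_of_ne hc (hsphere 0 x hxK))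
      rw [this]
      exact hK.inter_right isOpen_ball.isClosed_compl
    | succ m =>
      have : A (m+1) = K ∩ (closedBall p (s m) ∩ (ball p (s (m+1)))ᶜ) := by
        apply Subset.antisymm
        · rintro x ⟨hxK, hxb, hxc⟩
          exact ⟨hxK, mem_closedBall.mpr (le_of_lt (mem_ball.mp hxb)),
            fun hb => hxc (mem_closedBall.mpr (le_of_lt (mem_ball.mp hb)))⟩
        · rintro x ⟨hxK, hxb, hxc⟩
          refine ⟨hxK, ?_, fun hc => hxc ?_⟩
          · rw [mem_closedBall] at hxb
            exact mem_ball.mpr (lt_of_le_of_ne hxb (hsphere m x hxK))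
          · rw [mem_closedBall] at hc
            exact mem_ball.mpr (lt_of_le_of_ne hc (hsphere (m+1) x hxK))
      rw [this]
      exact hK.inter_right (isClosed_closedBall.inter isOpen_ball.isClosed_compl)
  · have key : ∀ i j, i < j → ∀ x, x ∈ A i → x ∈ A j → False := by
      intro i j hij x hxi hxj
      have hj0 : j ≠ 0 := Nat.pos_iff_ne_zero.mp (Nat.lt_of_le_of_lt (Nat.zero_le i) hij)
      have h1 := (hrange i x hxi).1
      have h2 := (hrange j x hxj).2 hj0
      have h3 : s (j-1) ≤ s i := by
        rcases Nat.lt_or_ge i (j-1) with h | h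
        · exact le_of_lt (hanti i (j-1) h)
        · have : i = j - 1 := le_antisymm (Nat.le_sub_one_of_lt hij) h
          rw [this]
      linarith
    intro i j hij
    apply eq_empty_iff_forall_notMem.mpr
    rintro x ⟨hxi, hxj⟩
    rcases Nat.lt_trichotomy i j with h | h | h
    · exact key i j h x hxi hxj
    · exact hij h
    · exact key j i h x hxj hxi
  · intro x hxK
    by_cases hxp : x = p
    · exact mem_insert_iff.mpr (Or.inl hxp)
    right
    have hdist : 0 < dist x p := dist_pos.mpr hxp
    have hex : ∃ j, s j < dist x p := by
      obtain ⟨n, hn⟩ := exists_nat_one_div_lt hdist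
      exact ⟨n, lt_trans ((hs n).2) hn⟩
    rw [mem_iUnion]
    set n := Nat.find hex with hn
    have hns : s n < dist x p := Nat.find_spec hex
    cases hcase : n with
    | zero =>
      refine ⟨0, hxK, fun hc => ?_⟩
      rw [mem_closedBall] at hc
      rw [hcase] at hns
      linarith
    | succ m =>
      have hm : ¬ s m < dist x p := Nat.find_min hex (by rw [← hn, hcase]; exact Nat.lt_succ_self m)
      have hm' : dist x p < s m := lt_of_le_of_ne (not_lt.mp hm) (hsphere m x hxK)
      refine ⟨m+1, hxK, ?_, fun hc => ?_⟩
      · exact mem_ball.mpr hm'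
      · rw [mem_closedBall] at hc
        rw [hcase] at hns
        linarith
  · intro j
    cases j with
    | zero => exact fun h => h (mem_closedBall_self (le_of_lt (hspos 0)))
    | succ m => exact fun h => h.2 (mem_closedBall_self (le_of_lt (hspos (m+1))))
end G
section H
variable {M : Type u} [MetricSpace M]

/-- a sequence of disjoint compact pieces shrinking to `q`, with prescribed CB content -/
lemma exists_target_seq {L : Set M} (hL : IsCompact L) (hLc : L.Countable) {q : M}
    {β : Ordinal.{u}} (hq : q ∈ CBD L β) (γ : ℕ → Ordinal.{u}) (c : ℕ → ℕ)
    (hγ : ∀ j, c j ≠ 0 → γ j + 1 ≤ β) :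
    ∃ B : ℕ → Set M, (∀ j, IsCompact (B j)) ∧ (∀ j, B j ⊆ L) ∧
      (∀ i j, i ≠ j → B i ∩ B j = ∅) ∧ (∀ j, q ∉ B j) ∧
      (∀ j, B j ⊆ ball q (1/((j:ℝ)+1))) ∧
      (∀ j, ∃ T : Finset M, ↑T ⊆ CBD (B j) (γ j) ∧ T.card = c j) := by
  classical
  set R : ℕ → ℝ → (Set M × ℝ) → Prop := fun j ε be =>
    0 < be.2 ∧ be.2 ≤ ε ∧ be.1 ⊆ ball q (min ε (1/((j:ℝ)+1))) ∧
    be.1 ∩ ball q be.2 = ∅ ∧ be.1 ⊆ L ∧ IsCompact be.1 ∧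
    (∃ T : Finset M, ↑T ⊆ CBD be.1 (γ j) ∧ T.card = c j) with hR
  have step : ∀ (j : ℕ) (ε : ℝ), 0 < ε → ∃ be, R j ε be := by
    intro j ε hε
    by_cases hc : c j = 0
    · refine ⟨(∅, ε), hε, le_refl _, empty_subset _, by simp, empty_subset _,
        isCompact_empty, ∅, by simp, by simp [hc]⟩
    · have hεm : 0 < min ε (1/((j:ℝ)+1)) := lt_min hε (by positivity)
      obtain ⟨B, hBc, hBL, hBball, ⟨ε', hε', hdisj⟩, T, hT, hTc⟩ :=
        exists_target_piece hL hLc (hγ j hc) hq (c j) hεm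
      refine ⟨(B, min ε' ε), lt_min hε' hε, min_le_right _ _, hBball, ?_, hBL, hBc, T, hT, hTc⟩
      apply eq_empty_iff_forall_notMem.mpr
      rintro x ⟨hx1, hx2⟩
      have : x ∈ B ∩ ball q ε' := ⟨hx1, ball_subset_ball (min_le_left _ _) hx2⟩
      rw [hdisj] at this; exact this
  set g : ℕ → Set M × ℝ := fun j => Nat.rec (Classical.choose (step 0 1 one_pos))
    (fun m prev => if h : 0 < prev.2 then Classical.choose (step (m+1) prev.2 h) else (∅, 1)) j
    with hg
  have h0 : R 0 1 (g 0) := Classical.choose_spec (step 0 1 one_pos)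
  have hsucc : ∀ m, 0 < (g m).2 → R (m+1) ((g m).2) (g (m+1)) := by
    intro m hm
    have heq : g (m+1) = if h : 0 < (g m).2 then Classical.choose (step (m+1) (g m).2 h)
        else (∅, 1) := rfl
    rw [dif_pos hm] at heq
    exact heq ▸ Classical.choose_spec (step (m+1) (g m).2 hm)
  have hpos : ∀ j, 0 < (g j).2 := by
    intro j
    induction j with
    | zero => exact h0.1
    | succ m ih => exact (hsucc m ih).1
  have hRall : ∀ j, ∃ ε, R j ε (g j) := by
    intro j
    cases j with
    | zero => exact ⟨1, h0⟩
    | succ m => exact ⟨(g m).2, hsucc m (hpos m)⟩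
  have hmono : ∀ m, (g (m+1)).2 ≤ (g m).2 := fun m => (hsucc m (hpos m)).2.1
  have hanti : ∀ i j, i ≤ j → (g j).2 ≤ (g i).2 := by
    intro i j hij
    induction j with
    | zero => simp_all
    | succ m ih =>
      rcases Nat.lt_or_ge i (m+1) with h | h
      · exact le_trans (hmono m) (ih (Nat.lt_succ_iff.mp h))
      · have : i = m + 1 := le_antisymm hij h
        rw [this]
  have hBsucc_ball : ∀ m, (g (m+1)).1 ⊆ ball q ((g m).2) := by
    intro m
    refine subset_trans (hsucc m (hpos m)).2.2.1 (ball_subset_ball (min_le_left _ _))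
  have hBdisj_ball : ∀ j, (g j).1 ∩ ball q ((g j).2) = ∅ := fun j =>
    (hRall j).choose_spec.2.2.2.1
  refine ⟨fun j => (g j).1, ?_, ?_, ?_, ?_, ?_, ?_⟩
  · exact fun j => (hRall j).choose_spec.2.2.2.2.2.1
  · exact fun j => (hRall j).choose_spec.2.2.2.2.1
  · have key : ∀ i j, i < j → (g i).1 ∩ (g j).1 = ∅ := by
      intro i j hij
      apply eq_empty_iff_forall_notMem.mpr
      rintro x ⟨hxi, hxj⟩
      obtain ⟨m, rfl⟩ : ∃ m, j = m + 1 := ⟨j - 1, (Nat.succ_pred_eq_of_pos (Nat.lt_of_le_of_lt (Nat.zero_le i) hij)).symm⟩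
      have h1 : x ∈ ball q ((g m).2) := hBsucc_ball m hxj
      have h2 : x ∈ ball q ((g i).2) :=
        ball_subset_ball (hanti i m (Nat.lt_succ_iff.mp hij)) h1
      have : x ∈ (g i).1 ∩ ball q ((g i).2) := ⟨hxi, h2⟩
      rw [hBdisj_ball i] at this; exact this
    intro i j hij
    rcases Nat.lt_trichotomy i j with h | h | h
    · exact key i j h
    · exact absurd h hij
    · rw [inter_comm]; exact key j i h
  · intro j hj
    have : q ∈ (g j).1 ∩ ball q ((g j).2) := ⟨hj, mem_ball_self (hpos j)⟩
    rw [hBdisj_ball j] at this; exact this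
  · intro j
    refine subset_trans (hRall j).choose_spec.2.2.1 (ball_subset_ball (min_le_right _ _))
  · exact fun j => (hRall j).choose_spec.2.2.2.2.2.2
end H
section MAIN
variable {M : Type u} [MetricSpace M] [CompleteSpace M]

lemma main_emb : ∀ o : Ordinal.{u}, ∀ (β : Ordinal.{u}) (n : ℕ) (K L : Set M),
    Ordinal.omega0 * β + ((n : Ordinal) + 1) = o →
    IsCompact K → K.Countable → IsCompact L → L.Countable →
    CBD K (β + 1) = ∅ → (CBD K β).ncard ≤ n + 1 →
    (∃ T : Finset M, ↑T ⊆ CBD L β ∧ T.card = n + 1) →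
    ∃ f : M → M, ContinuousOn f K ∧ Set.InjOn f K ∧ f '' K ⊆ L := by
  intro o
  induction o using Ordinal.induction with
  | _ o IH =>
  rintro β n K L ho hK hKc hL hLc htop hcard ⟨T, hTL, hTcard⟩
  classical
  rcases eq_empty_or_nonempty K with rfl | hKne
  · exact ⟨id, continuousOn_id, by simp, by simp⟩
  have hfin : (CBD K β).Finite := finite_of_derivedSet_empty hK
    (CBD_subset hK.isClosed β) (by rw [← CBD_succ]; exact htop)
  -- measure arithmetic
  have mlt1 : ∀ (β' : Ordinal.{u}) (k : ℕ), β' < β →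
      Ordinal.omega0 * β' + ((k : Ordinal) + 1) < o := by
    intro β' k hβ'
    have h1 : Ordinal.omega0 * β' + ((k : Ordinal) + 1) <
        Ordinal.omega0 * β' + Ordinal.omega0 := by
      apply add_lt_add_right
      have : ((k : Ordinal) + 1) = ((k+1 : ℕ) : Ordinal) := by push_cast; ring
      rw [this]
      exact Ordinal.nat_lt_omega0 (k+1)
    have h2 : Ordinal.omega0 * β' + Ordinal.omega0 ≤ Ordinal.omega0 * β := by
      rw [← Ordinal.mul_succ]
      exact mul_le_mul_right (Order.succ_le_of_lt hβ') _
    have h3 : Ordinal.omega0 * β ≤ o := ho ▸ le_self_add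
    exact lt_of_lt_of_le h1 (le_trans h2 h3)
  have mlt2 : ∀ k : ℕ, k < n → Ordinal.omega0 * β + ((k : Ordinal) + 1) < o := by
    intro k hk
    rw [← ho]
    apply add_lt_add_right
    rw [Ordinal.add_one_eq_succ, Ordinal.add_one_eq_succ, Order.succ_lt_succ_iff]
    exact_mod_cast hk
  set c := (CBD K β).ncard with hc
  by_cases hcn : c = n + 1
  swap
  · -- reduction to exact count
    rcases Nat.eq_zero_or_pos c with hc0 | hcpos
    ·
      have hKβ : CBD K β = ∅ := (Set.ncard_eq_zero hfin).mp hc0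
      obtain ⟨β', hβ'ne, hβ'top⟩ := exists_top hK hKc hKne
      have hβ'β : β' < β := by
        by_contra hge
        exact hβ'ne (eq_empty_of_subset_empty (hKβ ▸ CBD_anti hK.isClosed (not_lt.mp hge)))
      have hfin' : (CBD K β').Finite := finite_of_derivedSet_empty hK
        (CBD_subset hK.isClosed β') (by rw [← CBD_succ]; exact hβ'top)
      set c' := (CBD K β').ncard with hc'
      have hc'pos : 0 < c' := (Set.ncard_pos hfin').mpr (nonempty_iff_ne_empty.mpr hβ'ne)
      have hTne : T.Nonempty := Finset.card_pos.mp (by rw [hTcard]; omega)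
      obtain ⟨q₀, hq₀⟩ := hTne
      have hq₀d : q₀ ∈ derivedSet (CBD L β') := by
        rw [← CBD_succ]
        apply CBD_anti hL.isClosed _ (hTL hq₀)
        rw [Ordinal.add_one_eq_succ]
        exact Order.succ_le_of_lt hβ'β
      have hinf : (CBD L β').Infinite := by
        have := (hq₀d : AccPt q₀ (𝓟 (CBD L β'))).infinite_inter (univ_mem)
        rwa [inter_univ] at this
      obtain ⟨T', hT', hT'c⟩ := hinf.exists_subset_card_eq ((c'-1)+1)
      exact IH _ (mlt1 β' (c'-1) hβ'β) β' (c'-1) K L rfl hK hKc hL hLc hβ'top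
        (by rw [← hc']; omega) ⟨T', hT', hT'c⟩
    · -- same rank, smaller count
      have hck : c - 1 < n := by omega
      obtain ⟨T', hT'sub, hT'c⟩ := Finset.exists_subset_card_eq
        (show (c-1)+1 ≤ T.card by rw [hTcard]; omega)
      exact IH _ (mlt2 (c-1) hck) β (c-1) K L rfl hK hKc hL hLc htop
        (by rw [← hc]; omega) ⟨T', subset_trans hT'sub hTL, hT'c⟩
  -- exact count c = n+1
  have hKβne : (CBD K β).Nonempty := (Set.ncard_pos hfin).mp (by omega)
  by_cases hn : n = 0
  · -- single top point case
    subst hn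
    obtain ⟨p, hp⟩ := Set.ncard_eq_one.mp hcn
    obtain ⟨q, hq⟩ := Finset.card_eq_one.mp hTcard
    have hqL : q ∈ CBD L β := hTL (by rw [hq]; exact Finset.mem_singleton_self q)
    have hpK : p ∈ K := CBD_subset hK.isClosed β (by rw [hp]; exact rfl)
    obtain ⟨A, U, hUopen, hAU, hAc, hAdisj, hcover, hpU⟩ := exists_decomposition hK hKc p
    have hACBD : ∀ j o', CBD (A j) o' = CBD K o' ∩ U j := by
      intro j o'
      rw [hAU j]
      exact CBD_inter hK.isClosed (hUopen j) ((hAU j) ▸ (hAc j).isClosed) o'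
    have hAβ : ∀ j, CBD (A j) β = ∅ := by
      intro j
      rw [hACBD j β, hp]
      apply eq_empty_iff_forall_notMem.mpr
      rintro x ⟨hx1, hx2⟩
      rw [mem_singleton_iff] at hx1
      exact hpU j (hx1 ▸ hx2)
    have hAcnt : ∀ j, (A j).Countable := fun j => hKc.mono (hAU j ▸ inter_subset_left)
    have hdata : ∀ j, ∃ (γ : Ordinal.{u}) (cj : ℕ),
        (cj ≠ 0 → γ + 1 ≤ β) ∧
        (A j ≠ ∅ → CBD (A j) (γ+1) = ∅ ∧ (CBD (A j) γ).ncard = cj ∧ cj ≠ 0) ∧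
        (A j = ∅ → cj = 0) := by
      intro j
      by_cases hAe : A j = ∅
      · exact ⟨0, 0, fun h => absurd rfl h, fun h => absurd hAe h, fun _ => rfl⟩
      · obtain ⟨γ, hγne, hγtop⟩ := exists_top (hAc j) (hAcnt j)
          (nonempty_iff_ne_empty.mpr hAe)
        have hγβ : γ < β := by
          by_contra hge
          exact hγne (eq_empty_of_subset_empty
            ((hAβ j) ▸ CBD_anti (hAc j).isClosed (not_lt.mp hge)))
        have hfinγ : (CBD (A j) γ).Finite := finite_of_derivedSet_empty (hAc j)
          (CBD_subset (hAc j).isClosed γ) (by rw [← CBD_succ]; exact hγtop)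
        refine ⟨γ, (CBD (A j) γ).ncard, ?_, fun _ => ⟨hγtop, rfl, ?_⟩, fun h => absurd h hAe⟩
        · intro _
          rw [Ordinal.add_one_eq_succ]; exact Order.succ_le_of_lt hγβ
        · exact Nat.pos_iff_ne_zero.mp ((Set.ncard_pos hfinγ).mpr
            (nonempty_iff_ne_empty.mpr hγne))
    choose γv cv hγβ hcv hcv0 using hdata
    obtain ⟨B, hBc, hBL, hBdisj, hqB, hBball, hBT⟩ :=
      exists_target_seq hL hLc hqL γv cv hγβ
    have hemb : ∀ j, ∃ fj : M → M,
        ContinuousOn fj (A j) ∧ Set.InjOn fj (A j) ∧ fj '' (A j) ⊆ B j := by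
      intro j
      by_cases hAe : A j = ∅
      · refine ⟨id, ?_, ?_, ?_⟩ <;> simp [hAe]
      · obtain ⟨hγtop, hγcard, hγne⟩ := hcv j hAe
        have hγβ' : γv j < β := by
          have := hγβ j hγne
          rw [Ordinal.add_one_eq_succ] at this
          exact Order.succ_le_iff.mp this
        obtain ⟨Tj, hTj, hTjc⟩ := hBT j
        refine IH _ (mlt1 (γv j) (cv j - 1) hγβ') (γv j) (cv j - 1) (A j) (B j) rfl
          (hAc j) (hAcnt j) (hBc j) (hLc.mono (hBL j)) hγtop
          (by rw [hγcard]; omega) ⟨Tj, hTj, by rw [hTjc]; omega⟩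
    choose fv hfv using hemb
    have hsmall : ∀ ε : ℝ, 0 < ε → ∃ J : ℕ, ∀ j, J ≤ j → B j ⊆ ball q ε := by
      intro ε hε
      obtain ⟨J, hJ⟩ := exists_nat_one_div_lt hε
      refine ⟨J, fun j hj => subset_trans (hBball j) (ball_subset_ball ?_)⟩
      calc 1/((j:ℝ)+1) ≤ 1/((J:ℝ)+1) := by
            apply one_div_le_one_div_of_le (by positivity)
            exact_mod_cast add_le_add_left (Nat.cast_le.mpr hj) 1
      _ ≤ ε := le_of_lt hJ
    exact glue_seq hpK (CBD_subset hL.isClosed β hqL) hUopen hAU hAc hAdisj hcover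
      (fun j hpa => hpU j ((hAU j ▸ hpa : p ∈ K ∩ U j)).2) hBL hBdisj hqB hsmall hfv
  · -- at least two top points: split off one
    obtain ⟨p₁, hp₁⟩ := hKβne
    have hn1 : 1 ≤ n := Nat.one_le_iff_ne_zero.mpr hn
    set D := CBD K β \ {p₁} with hD
    have hDfin : D.Finite := hfin.diff
    have hDclosed : IsClosed D := hDfin.isClosed
    have hp₁D : p₁ ∈ Dᶜ := fun h => h.2 rfl
    obtain ⟨a, ha, haD⟩ := Metric.isOpen_iff.mp hDclosed.isOpen_compl p₁ hp₁D
    obtain ⟨r, hr0, hra, hKr1, hKr2, hKeq⟩ := exists_clopen_piece hK hKc p₁ ha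
    set K₁ := K ∩ ball p₁ r with hK₁
    set K₂ := K ∩ (closedBall p₁ r)ᶜ with hK₂
    have hKsplit : K = K₁ ∪ K₂ := by
      apply Subset.antisymm
      · intro x hx
        rcases lt_or_ge (dist x p₁) r with h | h
        · exact Or.inl ⟨hx, mem_ball.mpr h⟩
        · rcases eq_or_lt_of_le h with h' | h'
          · left
            rw [hKeq]
            exact ⟨hx, mem_closedBall.mpr (le_of_eq h'.symm)⟩
          · exact Or.inr ⟨hx, fun hc => absurd (mem_closedBall.mp hc) (not_le.mpr h')⟩
      · exact union_subset inter_subset_left inter_subset_left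
    have hKdisj : K₁ ∩ K₂ = ∅ := by
      apply eq_empty_iff_forall_notMem.mpr
      rintro x ⟨⟨-, hx1⟩, ⟨-, hx2⟩⟩
      exact hx2 (ball_subset_closedBall hx1)
    have hCBD1 : ∀ o', CBD K₁ o' = CBD K o' ∩ ball p₁ r :=
      fun o' => CBD_inter hK.isClosed isOpen_ball hKr1.isClosed o'
    have hCBD2 : ∀ o', CBD K₂ o' = CBD K o' ∩ (closedBall p₁ r)ᶜ :=
      fun o' => CBD_inter hK.isClosed isClosed_closedBall.isOpen_compl hKr2.isClosed o'
    have hK₁β : CBD K₁ β = {p₁} := by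
      rw [hCBD1]
      apply Subset.antisymm
      · rintro x ⟨hx1, hx2⟩
        by_contra hne
        have hxD : x ∈ D := ⟨hx1, hne⟩
        exact absurd hxD (haD (ball_subset_ball (le_of_lt hra) hx2))
      · rintro x (rfl : x = p₁)
        exact ⟨hp₁, mem_ball_self hr0⟩
    have hK₂β : CBD K₂ β ⊆ D := by
      rw [hCBD2]
      rintro x ⟨hx1, hx2⟩
      refine ⟨hx1, fun h => ?_⟩
      rw [mem_singleton_iff] at h
      exact hx2 (h ▸ mem_closedBall_self (le_of_lt hr0))
    have hDcard : D.ncard = n := by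
      rw [hD, Set.ncard_diff_singleton_of_mem hp₁]
      omega
    -- target side
    have hTne : T.Nonempty := Finset.card_pos.mp (by rw [hTcard]; omega)
    obtain ⟨x₀, hx₀⟩ := hTne
    set T' := T.erase x₀ with hT'
    have hT'card : T'.card = n := by rw [hT', Finset.card_erase_of_mem hx₀, hTcard]; omega
    have hx₀T' : x₀ ∈ (↑T' : Set M)ᶜ := fun h => (Finset.mem_erase.mp h).1 rfl
    obtain ⟨a', ha', haT'⟩ := Metric.isOpen_iff.mp
      (T'.finite_toSet.isClosed).isOpen_compl x₀ hx₀T'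
    obtain ⟨s', hs'0, hs'a, hLr1, hLr2, hLeq⟩ := exists_clopen_piece hL hLc x₀ ha'
    set L₁ := L ∩ ball x₀ s' with hL₁
    set L₂ := L ∩ (closedBall x₀ s')ᶜ with hL₂
    have hLdisj : L₁ ∩ L₂ = ∅ := by
      apply eq_empty_iff_forall_notMem.mpr
      rintro x ⟨⟨-, hx1⟩, ⟨-, hx2⟩⟩
      exact hx2 (ball_subset_closedBall hx1)
    have hCBDL1 : CBD L₁ β = CBD L β ∩ ball x₀ s' :=
      CBD_inter hL.isClosed isOpen_ball hLr1.isClosed β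
    have hCBDL2 : CBD L₂ β = CBD L β ∩ (closedBall x₀ s')ᶜ :=
      CBD_inter hL.isClosed isClosed_closedBall.isOpen_compl hLr2.isClosed β
    have hx₀L : x₀ ∈ CBD L₁ β := by
      rw [hCBDL1]
      exact ⟨hTL hx₀, mem_ball_self hs'0⟩
    have hT'L : (↑T' : Set M) ⊆ CBD L₂ β := by
      intro y hy
      rw [hCBDL2]
      have hyT : y ∈ (↑T : Set M) := Finset.coe_subset.mpr (Finset.erase_subset x₀ T) hy
      refine ⟨hTL hyT, fun hc => ?_⟩
      have hya : y ∉ ball x₀ a' := fun hb => (haT' hb) hy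
      rw [mem_closedBall] at hc
      rw [mem_ball] at hya
      push_neg at hya
      linarith
    -- recursive embeddings
    obtain ⟨f₁, hf₁⟩ := IH _ (mlt2 0 hn1) β 0 K₁ L₁ rfl hKr1
      (hKc.mono inter_subset_left) hLr1 (hLc.mono inter_subset_left)
      (by rw [hCBD1, htop]; exact empty_inter _)
      (by rw [hK₁β]; simp)
      ⟨{x₀}, by simpa using hx₀L, Finset.card_singleton x₀⟩
    obtain ⟨f₂, hf₂⟩ := IH _ (mlt2 (n-1) (by omega)) β (n-1) K₂ L₂ rfl hKr2
      (hKc.mono inter_subset_left) hLr2 (hLc.mono inter_subset_left)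
      (by rw [hCBD2, htop]; exact empty_inter _)
      (by
        have := Set.ncard_le_ncard hK₂β hDfin
        rw [hDcard] at this
        omega)
      ⟨T', hT'L, by rw [hT'card]; omega⟩
    obtain ⟨f, hf1, hf2, hf3⟩ := glue_two isOpen_ball isClosed_closedBall.isOpen_compl
      hK₁ hK₂ hKsplit hKdisj hLdisj hf₁ hf₂
    exact ⟨f, hf1, hf2, hf3.trans (union_subset inter_subset_left inter_subset_left)⟩
end MAIN
section FINAL
variable {M : Type u} [MetricSpace M] [CompleteSpace M]

lemma conv_emb {P Q : Set M} (hP : IsCompact P)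
    (h : ∃ f : M → M, ContinuousOn f P ∧ Set.InjOn f P ∧ f '' P ⊆ Q) :
    ∃ S : Set M, S ⊆ Q ∧ Nonempty (P ≃ₜ S) := by
  obtain ⟨f, hf1, hf2, hf3⟩ := h
  haveI : CompactSpace ↥P := isCompact_iff_compactSpace.mp hP
  set S := f '' P with hS
  set g : ↥P → ↥S := fun x => ⟨f x, ⟨x.1, x.2, rfl⟩⟩ with hg
  have hgc : Continuous g := Continuous.subtype_mk hf1.restrict _
  have hgb : Function.Bijective g := by
    constructor
    · intro a b hab
      exact Subtype.ext (hf2 a.2 b.2 (congrArg Subtype.val hab))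
    · rintro ⟨y, x, hx, rfl⟩
      exact ⟨⟨x, hx⟩, rfl⟩
  set e := Equiv.ofBijective g hgb with he
  have hec : Continuous e := hgc
  exact ⟨S, hf3, ⟨Continuous.homeoOfEquivCompactToT2 (f := e) hec⟩⟩

lemma emb_case {X Y : Set M} (hX : IsCompact X) (hXc : X.Countable)
    (hY : IsCompact Y) (hYc : Y.Countable) {βX : Ordinal.{u}} {nX : ℕ}
    (hXtop : CBD X (βX+1) = ∅) (hXcard : (CBD X βX).ncard ≤ nX + 1)
    (hT : ∃ T : Finset M, ↑T ⊆ CBD Y βX ∧ T.card = nX + 1) :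
    ∃ S : Set M, S ⊆ Y ∧ Nonempty (X ≃ₜ S) :=
  conv_emb hX (main_emb _ βX nX X Y rfl hX hXc hY hYc hXtop hXcard hT)

end FINAL

/-- If `X` and `Y` are countable compact subsets of a complete metric space, then
`X` is homeomorphic to a subset of `Y` or vice versa. -/
theorem countable_compact_subsets_comparable
    (M : Type*) [MetricSpace M] [CompleteSpace M]
    (X Y : Set M) (hXc : X.Countable) (hYc : Y.Countable)
    (hX : IsCompact X) (hY : IsCompact Y) :
    (∃ S : Set M, S ⊆ Y ∧ Nonempty (X ≃ₜ S)) ∨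
    (∃ S : Set M, S ⊆ X ∧ Nonempty (Y ≃ₜ S)) := by
  classical
  by_cases hX0 : X = ∅
  · exact Or.inl (conv_emb hX ⟨id, by simp [hX0], by simp [hX0], by simp [hX0]⟩)
  by_cases hY0 : Y = ∅
  · exact Or.inr (conv_emb hY ⟨id, by simp [hY0], by simp [hY0], by simp [hY0]⟩)
  obtain ⟨βX, hXne', hXtop⟩ := exists_top hX hXc (nonempty_iff_ne_empty.mpr hX0)
  obtain ⟨βY, hYne', hYtop⟩ := exists_top hY hYc (nonempty_iff_ne_empty.mpr hY0)
  have hXfin : (CBD X βX).Finite := finite_of_derivedSet_empty hX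
    (CBD_subset hX.isClosed βX) (by rw [← CBD_succ]; exact hXtop)
  have hYfin : (CBD Y βY).Finite := finite_of_derivedSet_empty hY
    (CBD_subset hY.isClosed βY) (by rw [← CBD_succ]; exact hYtop)
  set nX := (CBD X βX).ncard with hnX
  set nY := (CBD Y βY).ncard with hnY
  have hnXpos : 0 < nX := (Set.ncard_pos hXfin).mpr (nonempty_iff_ne_empty.mpr hXne')
  have hnYpos : 0 < nY := (Set.ncard_pos hYfin).mpr (nonempty_iff_ne_empty.mpr hYne')
  -- helper : get an arbitrarily large finset in CBD when ranks differ
  have hbig : ∀ (P : Set M), IsCompact P → ∀ (βs βl : Ordinal), βs < βl → CBD P βl ≠ ∅ →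
      ∀ m : ℕ, ∃ T : Finset M, ↑T ⊆ CBD P βs ∧ T.card = m := by
    intro P hP βs βl hlt hne m
    obtain ⟨q, hq⟩ := nonempty_iff_ne_empty.mpr hne
    have hq' : q ∈ derivedSet (CBD P βs) := by
      rw [← CBD_succ]
      apply CBD_anti hP.isClosed _ hq
      rw [Ordinal.add_one_eq_succ]
      exact Order.succ_le_of_lt hlt
    have hinf : (CBD P βs).Infinite := by
      have := (hq' : AccPt q (𝓟 (CBD P βs))).infinite_inter univ_mem
      rwa [inter_univ] at this
    exact hinf.exists_subset_card_eq m
  rcases lt_trichotomy βX βY with h | h | h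
  · obtain ⟨T, hT1, hT2⟩ := hbig Y hY βX βY h hYne' ((nX-1)+1)
    exact Or.inl (emb_case hX hXc hY hYc hXtop (by omega) ⟨T, hT1, hT2⟩)
  · subst h
    rcases le_or_gt nX nY with hle | hlt
    · obtain ⟨t, hts, htc⟩ := Set.exists_subset_card_eq (show (nX-1)+1 ≤ nY by omega)
      have htfin : t.Finite := hYfin.subset hts
      have hcard : htfin.toFinset.card = (nX-1)+1 := by
        rw [← Set.ncard_eq_toFinset_card t htfin, htc]
      exact Or.inl (emb_case hX hXc hY hYc hXtop (by omega)
        ⟨htfin.toFinset, by simpa using hts, hcard⟩)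
    · obtain ⟨t, hts, htc⟩ := Set.exists_subset_card_eq (show (nY-1)+1 ≤ nX by omega)
      have htfin : t.Finite := hXfin.subset hts
      have hcard : htfin.toFinset.card = (nY-1)+1 := by
        rw [← Set.ncard_eq_toFinset_card t htfin, htc]
      exact Or.inr (emb_case hY hYc hX hXc hYtop (by omega)
        ⟨htfin.toFinset, by simpa using hts, hcard⟩)
  · obtain ⟨T, hT1, hT2⟩ := hbig X hX βY βX h hXne' ((nY-1)+1)
    exact Or.inr (emb_case hY hYc hX hXc hYtop (by omega) ⟨T, hT1, hT2⟩)
end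

section
/- Every infinite topological space contains a subspace homeomorphic to ℕ equipped with exactly one of the following five topologies: the discrete topology, the indiscrete topology, the cofinite topology, the initial-segment topology (opens are ∅, ℕ, and the sets {k : k ≤ n}), or the final-segment topology (opens are ∅, ℕ, and the sets {k : k ≥ n}). -/
open Topology TopologicalSpace Set

open TopologicalSpace in
/-- The five Ginsburg–Sands topologies on ℕ: discrete, indiscrete, cofinite,
initial-segment, and final-segment. -/
noncomputable def gsTop : Fin 5 → TopologicalSpace ℕ
  | 0 => ⊥  -- discrete
  | 1 => ⊤  -- indiscrete
  | 2 => TopologicalSpace.generateFrom {s : Set ℕ | sᶜ.Finite}  -- cofinite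
  | 3 => TopologicalSpace.generateFrom {s : Set ℕ | ∃ n, s = {k | k ≤ n}}  -- initial segments
  | 4 => TopologicalSpace.generateFrom {s : Set ℕ | ∃ n, s = {k | n ≤ k}}  -- final segments

lemma gsTop2_isOpen (s : Set ℕ) : IsOpen[gsTop 2] s ↔ s = ∅ ∨ sᶜ.Finite := by
  constructor
  · intro h
    induction h with
    | basic u hu => exact Or.inr hu
    | univ => exact Or.inr (by simp)
    | inter u v _ _ ihu ihv =>
      rcases ihu with h | h
      · exact Or.inl (by simp [h])
      · rcases ihv with h' | h'
        · exact Or.inl (by simp [h'])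
        · exact Or.inr (by rw [Set.compl_inter]; exact h.union h')
    | sUnion S _ ih =>
      by_cases h : ∀ t ∈ S, t = ∅
      · refine Or.inl ?_
        simp only [Set.sUnion_eq_empty]
        exact h
      · push_neg at h
        obtain ⟨t, htS, ht⟩ := h
        rcases ih t htS with h | h
        · exact absurd h (Set.nonempty_iff_ne_empty.1 ht)
        · exact Or.inr (h.subset (Set.compl_subset_compl.2 (Set.subset_sUnion_of_mem htS)))
  · rintro (rfl | h)
    · exact @isOpen_empty _ (gsTop 2)
    · exact TopologicalSpace.GenerateOpen.basic s h

lemma gsTop3_isOpen (s : Set ℕ) :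
    IsOpen[gsTop 3] s ↔ s = ∅ ∨ s = univ ∨ ∃ n, s = Set.Iic n := by
  have hIic : ∀ n : ℕ, {k | k ≤ n} = Set.Iic n := fun n => rfl
  constructor
  · intro h
    induction h with
    | basic u hu => obtain ⟨n, rfl⟩ := hu; exact Or.inr (Or.inr ⟨n, rfl⟩)
    | univ => exact Or.inr (Or.inl rfl)
    | inter u v _ _ ihu ihv =>
      rcases ihu with rfl | rfl | ⟨n, rfl⟩
      · exact Or.inl (by simp)
      · rcases ihv with rfl | rfl | ⟨m, rfl⟩ <;> simp
      · rcases ihv with rfl | rfl | ⟨m, rfl⟩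
        · exact Or.inl (by simp)
        · exact Or.inr (Or.inr ⟨n, by simp⟩)
        · exact Or.inr (Or.inr ⟨min n m, by rw [Set.Iic_inter_Iic]⟩)
    | sUnion S _ ih =>
      by_cases huniv : univ ∈ S
      · exact Or.inr (Or.inl (Set.eq_univ_of_univ_subset (Set.subset_sUnion_of_mem huniv)))
      · set A : Set ℕ := {n | Set.Iic n ∈ S} with hA
        have hsub : ⋃₀ S = ⋃ n ∈ A, Set.Iic n := by
          apply Set.Subset.antisymm
          · rintro k ⟨t, htS, hkt⟩
            rcases ih t htS with rfl | rfl | ⟨n, rfl⟩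
            · exact absurd hkt (Set.notMem_empty k)
            · exact absurd htS huniv
            · exact Set.mem_biUnion htS hkt
          · exact Set.iUnion₂_subset fun n hn => Set.subset_sUnion_of_mem hn
        rcases Set.eq_empty_or_nonempty A with hAe | hAne
        · exact Or.inl (by rw [hsub, hAe]; simp)
        by_cases hbdd : BddAbove A
        · refine Or.inr (Or.inr ⟨sSup A, ?_⟩)
          rw [hsub]
          apply Set.Subset.antisymm
          · exact Set.iUnion₂_subset fun n hn => Set.Iic_subset_Iic.2 (le_csSup hbdd hn)
          · exact Set.subset_biUnion_of_mem (Nat.sSup_mem hAne hbdd)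
        · refine Or.inr (Or.inl ?_)
          rw [hsub]
          apply Set.eq_univ_of_forall
          intro k
          rw [bddAbove_def] at hbdd
          push_neg at hbdd
          obtain ⟨n, hnA, hkn⟩ := hbdd k
          exact Set.mem_biUnion hnA (le_of_lt hkn)
  · rintro (rfl | rfl | ⟨n, rfl⟩)
    · exact @isOpen_empty _ (gsTop 3)
    · exact @isOpen_univ _ (gsTop 3)
    · exact TopologicalSpace.GenerateOpen.basic _ ⟨n, rfl⟩

lemma gsTop4_isOpen (s : Set ℕ) :
    IsOpen[gsTop 4] s ↔ s = ∅ ∨ ∃ n, s = Set.Ici n := by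
  constructor
  · intro h
    induction h with
    | basic u hu => obtain ⟨n, rfl⟩ := hu; exact Or.inr ⟨n, rfl⟩
    | univ => exact Or.inr ⟨0, by ext k; simp⟩
    | inter u v _ _ ihu ihv =>
      rcases ihu with rfl | ⟨n, rfl⟩
      · exact Or.inl (by simp)
      · rcases ihv with rfl | ⟨m, rfl⟩
        · exact Or.inl (by simp)
        · exact Or.inr ⟨max n m, by rw [Set.Ici_inter_Ici]⟩
    | sUnion S _ ih =>
      set A : Set ℕ := {n | Set.Ici n ∈ S} with hA
      have hsub : ⋃₀ S = ⋃ n ∈ A, Set.Ici n := by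
        apply Set.Subset.antisymm
        · rintro k ⟨t, htS, hkt⟩
          rcases ih t htS with rfl | ⟨n, rfl⟩
          · exact absurd hkt (Set.notMem_empty k)
          · exact Set.mem_biUnion htS hkt
        · exact Set.iUnion₂_subset fun n hn => Set.subset_sUnion_of_mem hn
      rcases Set.eq_empty_or_nonempty A with hAe | hAne
      · exact Or.inl (by rw [hsub, hAe]; simp)
      · refine Or.inr ⟨sInf A, ?_⟩
        rw [hsub]
        apply Set.Subset.antisymm
        · exact Set.iUnion₂_subset fun n hn => Set.Ici_subset_Ici.2 (Nat.sInf_le hn)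
        · exact Set.subset_biUnion_of_mem (Nat.sInf_mem hAne)
  · rintro (rfl | ⟨n, rfl⟩)
    · exact @isOpen_empty _ (gsTop 4)
    · exact TopologicalSpace.GenerateOpen.basic _ ⟨n, rfl⟩

lemma downset_classify (A : Set ℕ) (h : ∀ m n : ℕ, m ≤ n → n ∈ A → m ∈ A) :
    A = ∅ ∨ A = univ ∨ ∃ n, A = Set.Iic n := by
  rcases Set.eq_empty_or_nonempty A with rfl | hne
  · exact Or.inl rfl
  by_cases huniv : A = univ
  · exact Or.inr (Or.inl huniv)
  · have : ∃ m, m ∉ A := by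
      by_contra hc; push_neg at hc; exact huniv (Set.eq_univ_of_forall hc)
    obtain ⟨m, hm⟩ := this
    have hAsub : A ⊆ Set.Iio m := fun k hk => by
      by_contra hk'
      exact hm (h m k (le_of_not_gt hk') hk)
    have hbdd : BddAbove A := ⟨m, fun k hk => le_of_lt (hAsub hk)⟩
    refine Or.inr (Or.inr ⟨sSup A, ?_⟩)
    apply Set.Subset.antisymm
    · exact fun k hk => le_csSup hbdd hk
    · exact fun k hk => h k (sSup A) hk (Nat.sSup_mem hne hbdd)

lemma upset_classify (A : Set ℕ) (h : ∀ m n : ℕ, m ≤ n → m ∈ A → n ∈ A) :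
    A = ∅ ∨ ∃ n, A = Set.Ici n := by
  rcases Set.eq_empty_or_nonempty A with rfl | hne
  · exact Or.inl rfl
  refine Or.inr ⟨sInf A, ?_⟩
  apply Set.Subset.antisymm
  · exact fun k hk => Nat.sInf_le hk
  · exact fun k hk => h (sInf A) k hk (Nat.sInf_mem hne)

lemma exists_infinite_color {C : Type*} [Finite C] {A : Set ℕ} (hA : A.Infinite) (g : ℕ → C) :
    ∃ c, {n | n ∈ A ∧ g n = c}.Infinite := by
  by_contra h
  push_neg at h
  have hsub : A ⊆ ⋃ c : C, {n | n ∈ A ∧ g n = c} :=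
    fun n hn => Set.mem_iUnion.2 ⟨g n, hn, rfl⟩
  exact hA ((Set.finite_iUnion h).subset hsub)

noncomputable def ramseyChain {C : Type*} [Finite C] [Nonempty C] (f : ℕ → ℕ → C) :
    ℕ → {A : Set ℕ // A.Infinite}
  | 0 => ⟨Set.univ, Set.infinite_univ⟩
  | k+1 =>
    let A := ramseyChain f k
    let a := sInf A.1
    let B := A.1 ∩ Set.Ioi a
    have hB : B.Infinite := ((A.2.diff (Set.finite_Iic a)).mono (by
      intro n hn
      exact ⟨hn.1, (lt_of_not_ge (fun h => hn.2 h) : a < n)⟩))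
    ⟨{n | n ∈ B ∧ f a n = Classical.choose (exists_infinite_color hB (f a))},
      Classical.choose_spec (exists_infinite_color hB (f a))⟩

lemma ramsey_pairs {C : Type*} [Finite C] [Nonempty C] (f : ℕ → ℕ → C) :
    ∃ (σ : ℕ → ℕ) (c : C), StrictMono σ ∧ ∀ m n, m < n → f (σ m) (σ n) = c := by
  classical
  set A : ℕ → Set ℕ := fun k => (ramseyChain f k).1 with hAdef
  set a : ℕ → ℕ := fun k => sInf (A k) with hadef
  have hmem : ∀ k, a k ∈ A k := fun k => Nat.sInf_mem (ramseyChain f k).2.nonempty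
  have hstep : ∀ k, ∀ n ∈ A (k+1), ∀ m ∈ A (k+1), n ∈ A k ∧ a k < n ∧ f (a k) n = f (a k) m := by
    intro k n hn m hm
    simp only [hAdef, hadef, ramseyChain] at hn hm ⊢
    exact ⟨hn.1.1, hn.1.2, hn.2.trans hm.2.symm⟩
  have hchain : ∀ k l, k ≤ l → A l ⊆ A k := by
    intro k l hkl
    induction l with
    | zero => rw [Nat.le_zero.1 hkl]
    | succ l ih =>
      rcases Nat.lt_or_ge k (l+1) with h | h
      · exact fun n hn => ih (Nat.lt_succ_iff.1 h) ((hstep l n hn n hn).1)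
      · rw [le_antisymm hkl h]
  have hkey : ∀ k l, k < l → a k < a l ∧ f (a k) (a l) = f (a k) (a (k+1)) := by
    intro k l hkl
    have : a l ∈ A (k+1) := hchain (k+1) l hkl (hmem l)
    obtain ⟨_, h2, h3⟩ := hstep k (a l) this (a (k+1)) (hmem (k+1))
    exact ⟨h2, h3⟩
  have hamono : StrictMono a := strictMono_nat_of_lt_succ fun k => (hkey k (k+1) (Nat.lt_succ_self k)).1
  set g : ℕ → C := fun k => f (a k) (a (k+1)) with hgdef
  obtain ⟨c, hc⟩ := exists_infinite_color (Set.infinite_univ (α := ℕ)) g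
  have hc' : {k | g k = c}.Infinite := hc.mono (fun k hk => hk.2)
  have hset : (setOf fun k => g k = c).Infinite := hc'
  refine ⟨a ∘ Nat.nth (fun k => g k = c), c, hamono.comp (Nat.nth_strictMono hset), ?_⟩
  intro m n hmn
  have hlt : Nat.nth (fun k => g k = c) m < Nat.nth (fun k => g k = c) n :=
    Nat.nth_strictMono hset hmn
  have := (hkey _ _ hlt).2
  simp only [Function.comp_apply]
  rw [this]
  exact Nat.nth_mem_of_infinite hset m

lemma homeo_of_isOpen_iff {α β : Type*} [tα : TopologicalSpace α] [tβ : TopologicalSpace β]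
    (e : α ≃ β) (h : ∀ V : Set α, IsOpen V ↔ IsOpen (e '' V)) :
    Nonempty (α ≃ₜ β) := by
  refine ⟨⟨e, ?_, ?_⟩⟩
  · rw [continuous_def]
    intro U hU
    show IsOpen (⇑e ⁻¹' U)
    rw [h]
    rwa [Set.image_preimage_eq _ e.surjective]
  · rw [continuous_def]
    intro V hV
    show IsOpen (⇑e.symm ⁻¹' V)
    rw [← e.image_eq_preimage_symm V]
    exact (h V).1 hV

-- membership in image under the canonical equiv
lemma mem_image_symm_ofInjective {X : Type*} (x : ℕ → X) (hx : Function.Injective x)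
    (V : Set (Set.range x)) (n : ℕ) :
    n ∈ (Equiv.ofInjective x hx).symm '' V ↔ (⟨x n, Set.mem_range_self n⟩ : Set.range x) ∈ V := by
  rw [Equiv.image_eq_preimage_symm, Equiv.symm_symm]
  constructor
  · intro hn
    simpa using hn
  · intro hn
    simpa using hn

-- image of V determines V
lemma image_symm_empty {X : Type*} (x : ℕ → X) (hx : Function.Injective x)
    (V : Set (Set.range x)) (h : (Equiv.ofInjective x hx).symm '' V = ∅) : V = ∅ := by
  have := congrArg (fun W => (Equiv.ofInjective x hx).symm.symm '' W) h
  simpa [Equiv.symm_image_image] using this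

lemma image_symm_univ {X : Type*} (x : ℕ → X) (hx : Function.Injective x)
    (V : Set (Set.range x)) (h : (Equiv.ofInjective x hx).symm '' V = univ) : V = univ := by
  apply Set.eq_univ_of_forall
  rintro ⟨p, n, rfl⟩
  have : n ∈ (Equiv.ofInjective x hx).symm '' V := h ▸ Set.mem_univ n
  rwa [mem_image_symm_ofInjective] at this

-- the indiscrete case
lemma case_indiscrete {X : Type*} [TopologicalSpace X] (x : ℕ → X)
    (hx : Function.Injective x) (hins : ∀ m n : ℕ, Inseparable (x m) (x n)) :
    Nonempty (@Homeomorph (Set.range x) ℕ _ ⊤) := by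
  letI : TopologicalSpace ℕ := ⊤
  apply homeo_of_isOpen_iff (Equiv.ofInjective x hx).symm
  intro V
  rw [TopologicalSpace.isOpen_top_iff]
  constructor
  · intro hV
    obtain ⟨U, hU, hUV⟩ := isOpen_induced_iff.1 hV
    rcases Set.eq_empty_or_nonempty ((Equiv.ofInjective x hx).symm '' V) with he | ⟨n₀, hn₀⟩
    · exact Or.inl he
    · refine Or.inr (Set.eq_univ_of_forall fun n => ?_)
      rw [mem_image_symm_ofInjective] at hn₀ ⊢
      rw [← hUV] at hn₀ ⊢
      exact ((hins n₀ n).mem_open_iff hU).1 hn₀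
  · rintro (he | he)
    · rw [image_symm_empty x hx V he]
      exact isOpen_empty
    · rw [image_symm_univ x hx V he]
      exact isOpen_univ

lemma case_chain_up {X : Type*} [TopologicalSpace X] (t : TopologicalSpace ℕ)
    (ht : ∀ s : Set ℕ, IsOpen[t] s ↔ s = ∅ ∨ s = univ ∨ ∃ n, s = Set.Iic n)
    (x : ℕ → X) (hx : Function.Injective x)
    (h1 : ∀ m n : ℕ, m < n → x m ⤳ x n)
    (h2 : ∀ m n : ℕ, m < n → ¬ (x n ⤳ x m)) :
    Nonempty (@Homeomorph (Set.range x) ℕ _ t) := by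
  letI : TopologicalSpace ℕ := t
  apply homeo_of_isOpen_iff (Equiv.ofInjective x hx).symm
  intro V
  rw [ht]
  set A := (Equiv.ofInjective x hx).symm '' V with hAdef
  have hmemA : ∀ n, n ∈ A ↔ (⟨x n, Set.mem_range_self n⟩ : Set.range x) ∈ V :=
    mem_image_symm_ofInjective x hx V
  constructor
  · intro hV
    obtain ⟨U, hU, hUV⟩ := isOpen_induced_iff.1 hV
    apply downset_classify
    intro m n hmn hn
    rw [hmemA] at hn ⊢
    rw [← hUV] at hn ⊢
    rcases eq_or_lt_of_le hmn with rfl | hlt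
    · exact hn
    · exact specializes_iff_forall_open.1 (h1 m n hlt) U hU hn
  · rintro (he | he | ⟨n, he⟩)
    · rw [image_symm_empty x hx V he]; exact isOpen_empty
    · rw [image_symm_univ x hx V he]; exact isOpen_univ
    · -- V = preimage of an open U with x m ∈ U ↔ m ≤ n
      have hsep : ∃ U, IsOpen U ∧ x n ∈ U ∧ x (n+1) ∉ U := by
        have := h2 n (n+1) (Nat.lt_succ_self n)
        rw [specializes_iff_forall_open] at this
        push_neg at this
        obtain ⟨U, hUo, hnU, hn1U⟩ := this
        exact ⟨U, hUo, hnU, hn1U⟩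
      obtain ⟨U, hUo, hnU, hn1U⟩ := hsep
      have hchar : ∀ m : ℕ, x m ∈ U ↔ m ≤ n := by
        intro m
        constructor
        · intro hm
          by_contra hmn
          push_neg at hmn
          rcases eq_or_lt_of_le (Nat.succ_le_of_lt hmn) with h | h
          · rw [← h] at hm; exact hn1U hm
          · exact hn1U (specializes_iff_forall_open.1 (h1 (n+1) m h) U hUo hm)
        · intro hm
          rcases eq_or_lt_of_le hm with rfl | h
          · exact hnU
          · exact specializes_iff_forall_open.1 (h1 m n h) U hUo hnU
      rw [isOpen_induced_iff]
      refine ⟨U, hUo, ?_⟩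
      ext ⟨p, m, rfl⟩
      have : (⟨x m, Set.mem_range_self m⟩ : Set.range x) ∈ V ↔ m ∈ A := (hmemA m).symm
      simp only [Set.mem_preimage]
      rw [he] at this
      constructor
      · intro hm
        exact this.2 ((hchar m).1 hm)
      · intro hm
        exact (hchar m).2 (this.1 hm)

lemma case_chain_down {X : Type*} [TopologicalSpace X] (t : TopologicalSpace ℕ)
    (ht : ∀ s : Set ℕ, IsOpen[t] s ↔ s = ∅ ∨ ∃ n, s = Set.Ici n)
    (x : ℕ → X) (hx : Function.Injective x)
    (h1 : ∀ m n : ℕ, m < n → x n ⤳ x m)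
    (h2 : ∀ m n : ℕ, m < n → ¬ (x m ⤳ x n)) :
    Nonempty (@Homeomorph (Set.range x) ℕ _ t) := by
  letI : TopologicalSpace ℕ := t
  apply homeo_of_isOpen_iff (Equiv.ofInjective x hx).symm
  intro V
  rw [ht]
  set A := (Equiv.ofInjective x hx).symm '' V with hAdef
  have hmemA : ∀ n, n ∈ A ↔ (⟨x n, Set.mem_range_self n⟩ : Set.range x) ∈ V :=
    mem_image_symm_ofInjective x hx V
  constructor
  · intro hV
    obtain ⟨U, hU, hUV⟩ := isOpen_induced_iff.1 hV
    apply upset_classify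
    intro m n hmn hm
    rw [hmemA] at hm ⊢
    rw [← hUV] at hm ⊢
    rcases eq_or_lt_of_le hmn with rfl | hlt
    · exact hm
    · exact specializes_iff_forall_open.1 (h1 m n hlt) U hU hm
  · rintro (he | ⟨n, he⟩)
    · rw [image_symm_empty x hx V he]; exact isOpen_empty
    · rcases Nat.eq_zero_or_pos n with rfl | hn0
      · have : A = Set.univ := by rw [he]; ext k; simp
        rw [image_symm_univ x hx V this]; exact isOpen_univ
      · obtain ⟨n', rfl⟩ : ∃ n', n = n' + 1 := ⟨n - 1, (Nat.succ_pred_eq_of_pos hn0).symm⟩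
        have hsep : ∃ U, IsOpen U ∧ x (n'+1) ∈ U ∧ x n' ∉ U := by
          have := h2 n' (n'+1) (Nat.lt_succ_self n')
          rw [specializes_iff_forall_open] at this
          push_neg at this
          obtain ⟨U, hUo, hnU, hn1U⟩ := this
          exact ⟨U, hUo, hnU, hn1U⟩
        obtain ⟨U, hUo, hnU, hn1U⟩ := hsep
        have hchar : ∀ m : ℕ, x m ∈ U ↔ n' + 1 ≤ m := by
          intro m
          constructor
          · intro hm
            by_contra hmn
            push_neg at hmn
            have hm' : m ≤ n' := Nat.lt_succ_iff.1 hmn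
            rcases eq_or_lt_of_le hm' with rfl | h
            · exact hn1U hm
            · exact hn1U (specializes_iff_forall_open.1 (h1 m n' h) U hUo hm)
          · intro hm
            rcases eq_or_lt_of_le hm with h | h
            · rw [h] at hnU; exact hnU
            · exact specializes_iff_forall_open.1 (h1 (n'+1) m h) U hUo hnU
        rw [isOpen_induced_iff]
        refine ⟨U, hUo, ?_⟩
        ext ⟨p, m, rfl⟩
        have : (⟨x m, Set.mem_range_self m⟩ : Set.range x) ∈ V ↔ m ∈ A := (hmemA m).symm
        simp only [Set.mem_preimage]
        rw [he] at this
        constructor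
        · intro hm
          exact this.2 ((hchar m).1 hm)
        · intro hm
          exact (hchar m).2 (this.1 hm)

lemma case_t1 {X : Type*} [TopologicalSpace X] (t0 t2 : TopologicalSpace ℕ)
    (ht0 : ∀ s : Set ℕ, IsOpen[t0] s)
    (ht2 : ∀ s : Set ℕ, IsOpen[t2] s ↔ s = ∅ ∨ sᶜ.Finite)
    (z : ℕ → X) (hz : Function.Injective z)
    (hsep : ∀ m n : ℕ, m ≠ n → ∃ U, IsOpen U ∧ z m ∈ U ∧ z n ∉ U) :
    (∃ S : Set X, Nonempty (@Homeomorph S ℕ _ t0)) ∨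
    (∃ S : Set X, Nonempty (@Homeomorph S ℕ _ t2)) := by
  classical
  set Z : Set X := Set.range z with hZdef
  -- separation of a point of Z from a finite subset of Z
  have hsepfin : ∀ p ∈ Z, ∀ K : Set X, K.Finite → K ⊆ Z → p ∉ K →
      ∃ U, IsOpen U ∧ p ∈ U ∧ U ∩ K = ∅ := by
    rintro p ⟨m, rfl⟩ K hKfin hKZ hpK
    have hex : ∀ k ∈ K, ∃ U, IsOpen U ∧ z m ∈ U ∧ k ∉ U := by
      intro k hk
      obtain ⟨n, rfl⟩ := hKZ hk
      have hmn : m ≠ n := fun h => hpK (h ▸ hk)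
      exact hsep m n hmn
    choose! U hUo hUm hUk using hex
    refine ⟨⋂ k ∈ K, U k, hKfin.isOpen_biInter hUo, Set.mem_biInter hUm, ?_⟩
    ext y
    simp only [Set.mem_inter_iff, Set.mem_iInter, Set.mem_empty_iff_false, iff_false, not_and]
    intro hy hyK
    exact hUk y hyK (hy y hyK)
  set F : Set (Set X) := {C | C ⊆ Z ∧ C.Infinite ∧ ∃ D, IsClosed D ∧ C = D ∩ Z} with hFdef
  have hZF : Z ∈ F := ⟨Set.Subset.rfl, Set.infinite_range_of_injective hz,
    Set.univ, isClosed_univ, (Set.univ_inter Z).symm⟩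
  by_cases hmin : ∃ C ∈ F, ∀ C' ∈ F, C' ⊆ C → C' = C
  · -- cofinite case
    right
    obtain ⟨C, hCF, hCmin⟩ := hmin
    obtain ⟨hCZ, hCinf, D, hD, hCD⟩ := hCF
    set w : ℕ → X := fun n => (Set.Infinite.natEmbedding C hCinf n : X) with hwdef
    have hw : Function.Injective w :=
      Subtype.coe_injective.comp (Set.Infinite.natEmbedding C hCinf).injective
    have hwC : ∀ n, w n ∈ C := fun n => (Set.Infinite.natEmbedding C hCinf n).2
    set S : Set X := Set.range w with hSdef
    have hSC : S ⊆ C := Set.range_subset_iff.2 hwC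
    -- (a)
    have ha : ∀ U : Set X, IsOpen U → (U ∩ S = ∅ ∨ (S \ U).Finite) := by
      intro U hU
      by_cases hinf : (C ∩ Uᶜ).Infinite
      · left
        have hCF' : C ∩ Uᶜ ∈ F :=
          ⟨(Set.inter_subset_left).trans hCZ, hinf, D ∩ Uᶜ, hD.inter hU.isClosed_compl, by
            rw [hCD]; ext y; simp [Set.mem_inter_iff]; tauto⟩
        have := hCmin _ hCF' Set.inter_subset_left
        have hCU : C ⊆ Uᶜ := by rw [← this]; exact Set.inter_subset_right
        ext y
        simp only [Set.mem_inter_iff, Set.mem_empty_iff_false, iff_false, not_and]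
        intro hyU hyS
        exact hCU (hSC hyS) hyU
      · right
        rw [Set.not_infinite] at hinf
        exact hinf.subset (fun y hy => ⟨hSC hy.1, hy.2⟩)
    -- (b)
    have hb : ∀ K : Set X, K.Finite → K ⊆ S → ∃ U, IsOpen U ∧ U ∩ S = S \ K := by
      intro K hKfin hKS
      have hex : ∀ s ∈ S \ K, ∃ U, IsOpen U ∧ s ∈ U ∧ U ∩ K = ∅ :=
        fun s hs => hsepfin s (hCZ (hSC hs.1)) K hKfin ((hKS.trans hSC).trans hCZ) hs.2
      choose! U hUo hUs hUK using hex
      refine ⟨⋃ s ∈ S \ K, U s, isOpen_biUnion hUo, ?_⟩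
      apply Set.Subset.antisymm
      · rintro y ⟨hyU, hyS⟩
        obtain ⟨s, hs, hys⟩ := Set.mem_iUnion₂.1 hyU
        refine ⟨hyS, fun hyK => ?_⟩
        have : y ∈ U s ∩ K := ⟨hys, hyK⟩
        rw [hUK s hs] at this
        exact this
      · intro y hy
        exact ⟨Set.mem_biUnion hy (hUs y hy), hy.1⟩
    refine ⟨S, ?_⟩
    letI : TopologicalSpace ℕ := t2
    apply homeo_of_isOpen_iff (Equiv.ofInjective w hw).symm
    intro V
    rw [ht2]
    set A := (Equiv.ofInjective w hw).symm '' V with hAdef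
    have hmemA : ∀ n, n ∈ A ↔ (⟨w n, Set.mem_range_self n⟩ : Set.range w) ∈ V :=
      mem_image_symm_ofInjective w hw V
    constructor
    · intro hV
      obtain ⟨U, hU, hUV⟩ := isOpen_induced_iff.1 hV
      rcases ha U hU with h | h
      · left
        ext n
        simp only [Set.mem_empty_iff_false, iff_false]
        intro hn
        rw [hmemA, ← hUV] at hn
        have : w n ∈ U ∩ S := ⟨hn, Set.mem_range_self n⟩
        rw [h] at this
        exact this
      · right
        have hsub : Aᶜ ⊆ w ⁻¹' (S \ U) := by
          intro n hn
          refine ⟨Set.mem_range_self n, fun hU' => hn ?_⟩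
          rw [hmemA, ← hUV]
          exact hU'
        exact (h.preimage (hw.injOn)).subset hsub
    · rintro (he | he)
      · rw [image_symm_empty w hw V he]; exact isOpen_empty
      · obtain ⟨U, hUo, hUS⟩ := hb (w '' Aᶜ) (he.image w) (Set.image_subset_range w _)
        rw [isOpen_induced_iff]
        refine ⟨U, hUo, ?_⟩
        ext ⟨p, m, rfl⟩
        simp only [Set.mem_preimage]
        have h1 : (⟨w m, Set.mem_range_self m⟩ : Set.range w) ∈ V ↔ m ∈ A := (hmemA m).symm
        have h2 : w m ∈ U ↔ m ∈ A := by
          constructor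
          · intro hm
            have : w m ∈ S \ (w '' Aᶜ) := by rw [← hUS]; exact ⟨hm, Set.mem_range_self m⟩
            by_contra hA
            exact this.2 (Set.mem_image_of_mem w hA)
          · intro hm
            have : w m ∈ S \ (w '' Aᶜ) := by
              refine ⟨Set.mem_range_self m, fun hc => ?_⟩
              obtain ⟨n, hn, hnm⟩ := hc
              rw [hw hnm] at hn
              exact hn hm
            rw [← hUS] at this
            exact this.1
        rw [h2, h1]
  · -- discrete case
    left
    push_neg at hmin
    have hstep : ∀ C : {C : Set X // C ∈ F}, ∃ C' : {C : Set X // C ∈ F},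
        C'.1 ⊆ C.1 ∧ C'.1 ≠ C.1 := by
      rintro ⟨C, hC⟩
      obtain ⟨C', hC'F, hsub, hne⟩ := hmin C hC
      exact ⟨⟨C', hC'F⟩, hsub, hne⟩
    set seq : ℕ → {C : Set X // C ∈ F} :=
      fun n => Nat.rec ⟨Z, hZF⟩ (fun _ p => Classical.choose (hstep p)) n with hseqdef
    have hseq : ∀ n, (seq (n+1)).1 ⊆ (seq n).1 ∧ (seq (n+1)).1 ≠ (seq n).1 :=
      fun n => Classical.choose_spec (hstep (seq n))
    have hne : ∀ n, ((seq n).1 \ (seq (n+1)).1).Nonempty := by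
      intro n
      rw [Set.diff_nonempty]
      intro hsub
      exact (hseq n).2 (Set.Subset.antisymm (hseq n).1 hsub)
    set w : ℕ → X := fun n => (hne n).some with hwdef
    have hw1 : ∀ n, w n ∈ (seq n).1 := fun n => ((hne n).some_mem).1
    have hw2 : ∀ n, w n ∉ (seq (n+1)).1 := fun n => ((hne n).some_mem).2
    have hmono : ∀ m n : ℕ, m ≤ n → (seq n).1 ⊆ (seq m).1 := by
      intro m n hmn
      induction n with
      | zero => rw [Nat.le_zero.1 hmn]
      | succ n ih =>
        rcases Nat.lt_or_ge m (n+1) with h | h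
        · exact ((hseq n).1).trans (ih (Nat.lt_succ_iff.1 h))
        · rw [le_antisymm hmn h]
    have hwlt : ∀ m n : ℕ, m < n → w n ∈ (seq (m+1)).1 := fun m n h => hmono (m+1) n h (hw1 n)
    have hw : Function.Injective w := by
      intro m n hmn
      by_contra hne'
      rcases Nat.lt_or_ge m n with h | h
      · exact hw2 m (hmn ▸ hwlt m n h)
      · have h' : n < m := lt_of_le_of_ne h (Ne.symm hne')
        exact hw2 n (hmn ▸ hwlt n m h')
    have hwZ : ∀ n, w n ∈ Z := fun n => ((seq n).2).1 (hw1 n)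
    have hsing : ∀ k : ℕ, ∃ U, IsOpen U ∧ w k ∈ U ∧ ∀ l, l ≠ k → w l ∉ U := by
      intro k
      obtain ⟨hsub1, hinf1, D, hD, hCD⟩ := (seq (k+1)).2
      have hKfin : (w '' Set.Iio k).Finite := (Set.finite_Iio k).image w
      have hKZ : w '' Set.Iio k ⊆ Z := by
        rintro y ⟨l, _, rfl⟩; exact hwZ l
      have hpK : w k ∉ w '' Set.Iio k := by
        rintro ⟨l, hl, hlk⟩
        exact (Nat.ne_of_lt hl) (hw hlk)
      obtain ⟨U2, hU2o, hU2k, hU2K⟩ := hsepfin (w k) (hwZ k) _ hKfin hKZ hpK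
      refine ⟨Dᶜ ∩ U2, hD.isOpen_compl.inter hU2o, ⟨?_, hU2k⟩, ?_⟩
      · intro hDk
        exact hw2 k (by rw [hCD]; exact ⟨hDk, hwZ k⟩)
      · intro l hl hlU
        rcases Nat.lt_or_ge l k with h | h
        · have : w l ∈ U2 ∩ w '' Set.Iio k := ⟨hlU.2, Set.mem_image_of_mem w h⟩
          rw [hU2K] at this
          exact this
        · have h' : k < l := lt_of_le_of_ne h (Ne.symm hl)
          have : w l ∈ (seq (k+1)).1 := hwlt k l h'
          rw [hCD] at this
          exact hlU.1 this.1
    have hallopen : ∀ V : Set (Set.range w), IsOpen V := by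
      intro V
      have hV : V = ⋃ p ∈ V, {p} := (Set.biUnion_of_singleton V).symm
      rw [hV]
      apply isOpen_biUnion
      rintro ⟨p, m, rfl⟩ _
      obtain ⟨U, hUo, hUk, hUl⟩ := hsing m
      rw [isOpen_induced_iff]
      refine ⟨U, hUo, ?_⟩
      ext ⟨q, l, rfl⟩
      simp only [Set.mem_preimage, Set.mem_singleton_iff]
      constructor
      · intro hq
        have hq' : w l ∈ U := hq
        have hlm : l = m := by
          by_contra hne'
          exact hUl l hne' hq'
        subst hlm
        exact Subtype.ext rfl
      · intro hq
        have hlm : l = m := hw (congrArg Subtype.val hq)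
        show w l ∈ U
        rw [hlm]
        exact hUk
    refine ⟨Set.range w, ?_⟩
    letI : TopologicalSpace ℕ := t0
    apply homeo_of_isOpen_iff (Equiv.ofInjective w hw).symm
    intro V
    exact ⟨fun _ => ht0 _, fun _ => hallopen V⟩

lemma gsTop0_isOpen (s : Set ℕ) : IsOpen[gsTop 0] s := by
  show IsOpen[⊥] s
  letI : TopologicalSpace ℕ := ⊥
  haveI : DiscreteTopology ℕ := ⟨rfl⟩
  exact isOpen_discrete s

lemma exists_gs (X : Type*) [TopologicalSpace X] [Infinite X] :
    ∃ (S : Set X) (i : Fin 5), Nonempty (@Homeomorph S ℕ _ (gsTop i)) := by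
  classical
  by_cases hcl : ∃ x : X, {y | Inseparable x y}.Infinite
  · obtain ⟨x₀, hx₀⟩ := hcl
    set f := Set.Infinite.natEmbedding _ hx₀ with hfdef
    set x : ℕ → X := fun n => (f n : X) with hxdef
    have hx : Function.Injective x := Subtype.coe_injective.comp f.injective
    have hins : ∀ m n, Inseparable (x m) (x n) := fun m n => ((f m).2).symm.trans ((f n).2)
    exact ⟨Set.range x, 1, case_indiscrete x hx hins⟩
  · push_neg at hcl
    have hSQ : Infinite (SeparationQuotient X) := by
      by_contra hfin
      rw [not_infinite_iff_finite] at hfin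
      have hsub : (Set.univ : Set X) ⊆
          ⋃ q : SeparationQuotient X, SeparationQuotient.mk ⁻¹' {q} :=
        fun y _ => Set.mem_iUnion.2 ⟨SeparationQuotient.mk y, rfl⟩
      have hfin' : (Set.univ : Set X).Finite := by
        refine ((Set.finite_iUnion ?_).subset hsub)
        intro q
        obtain ⟨y, rfl⟩ := SeparationQuotient.surjective_mk q
        have heq : SeparationQuotient.mk ⁻¹' {SeparationQuotient.mk y}
            = {y' | Inseparable y y'} := by
          ext y'
          simp only [Set.mem_preimage, Set.mem_singleton_iff, Set.mem_setOf_eq,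
            SeparationQuotient.mk_eq_mk]
          exact ⟨fun h => h.symm, fun h => h.symm⟩
        rw [heq]
        exact hcl y
      exact Set.infinite_univ hfin'
    set q : ℕ ↪ SeparationQuotient X := Infinite.natEmbedding _ with hqdef
    have hgex : ∀ n, ∃ y : X, SeparationQuotient.mk y = q n :=
      fun n => SeparationQuotient.surjective_mk (q n)
    choose g hg using hgex
    have hgi : Function.Injective g := fun m n h => q.injective (by rw [← hg, ← hg, h])
    have hgni : ∀ m n, m ≠ n → ¬ Inseparable (g m) (g n) := by
      intro m n hmn hins
      exact hmn (q.injective (by rw [← hg, ← hg, SeparationQuotient.mk_eq_mk.2 hins]))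
    set col : ℕ → ℕ → Fin 3 :=
      fun m n => if g m ⤳ g n then 0 else if g n ⤳ g m then 1 else 2 with hcoldef
    obtain ⟨σ, c, hσ, hc⟩ := ramsey_pairs col
    set x : ℕ → X := g ∘ σ with hxdef
    have hx : Function.Injective x := hgi.comp hσ.injective
    have hxni : ∀ m n, m ≠ n → ¬ Inseparable (x m) (x n) :=
      fun m n h => hgni _ _ (fun e => h (hσ.injective e))
    have hcol : ∀ m n, m < n →
        (if x m ⤳ x n then (0 : Fin 3) else if x n ⤳ x m then 1 else 2) = c := by
      intro m n h
      exact hc m n h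
    fin_cases c
    · have hup : ∀ m n, m < n → x m ⤳ x n := by
        intro m n h
        have := hcol m n h
        by_contra hnot
        rw [if_neg hnot] at this
        by_cases h2 : x n ⤳ x m
        · rw [if_pos h2] at this; exact absurd this (by decide)
        · rw [if_neg h2] at this; exact absurd this (by decide)
      have hnd : ∀ m n, m < n → ¬ (x n ⤳ x m) := by
        intro m n h hspec
        exact hxni m n (Nat.ne_of_lt h) ((hup m n h).antisymm hspec)
      exact ⟨Set.range x, 3, case_chain_up (gsTop 3) gsTop3_isOpen x hx hup hnd⟩
    · have hdown : ∀ m n, m < n → x n ⤳ x m := by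
        intro m n h
        have := hcol m n h
        by_cases h1 : x m ⤳ x n
        · rw [if_pos h1] at this; exact absurd this (by decide)
        · rw [if_neg h1] at this
          by_contra hnot
          rw [if_neg hnot] at this; exact absurd this (by decide)
      have hnd : ∀ m n, m < n → ¬ (x m ⤳ x n) := fun m n h hspec =>
        hxni m n (Nat.ne_of_lt h) (hspec.antisymm (hdown m n h))
      exact ⟨Set.range x, 4, case_chain_down (gsTop 4) gsTop4_isOpen x hx hdown hnd⟩
    · have hnone : ∀ m n, m < n → ¬ (x m ⤳ x n) ∧ ¬ (x n ⤳ x m) := by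
        intro m n h
        have := hcol m n h
        by_cases h1 : x m ⤳ x n
        · rw [if_pos h1] at this; exact absurd this (by decide)
        · by_cases h2 : x n ⤳ x m
          · rw [if_neg h1, if_pos h2] at this; exact absurd this (by decide)
          · exact ⟨h1, h2⟩
      have hsep : ∀ m n, m ≠ n → ∃ U, IsOpen U ∧ x m ∈ U ∧ x n ∉ U := by
        intro m n hmn
        have hnot : ¬ (x n ⤳ x m) := by
          rcases Nat.lt_or_ge m n with h | h
          · exact (hnone m n h).2
          · exact (hnone n m (lt_of_le_of_ne h (Ne.symm hmn))).1
        rw [specializes_iff_forall_open] at hnot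
        push_neg at hnot
        obtain ⟨U, h1, h2, h3⟩ := hnot
        exact ⟨U, h1, h2, h3⟩
      rcases case_t1 (gsTop 0) (gsTop 2) gsTop0_isOpen gsTop2_isOpen x hx hsep with
        ⟨S, hS⟩ | ⟨S, hS⟩
      · exact ⟨S, 0, hS⟩
      · exact ⟨S, 2, hS⟩

def gsInv : Fin 5 → Bool × Bool × Bool
  | 0 => (true, true, true)
  | 1 => (false, false, false)
  | 2 => (true, true, false)
  | 3 => (false, true, true)
  | 4 => (false, true, false)

lemma isOpen_compl_iff' {t : TopologicalSpace ℕ} {s : Set ℕ} :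
    IsOpen[t] sᶜ ↔ IsClosed[t] s := @isOpen_compl_iff ℕ s t

lemma gsInv_inj : ∀ i j : Fin 5, gsInv i = gsInv j → i = j := by decide

lemma gs_t1 (i : Fin 5) : @T1Space ℕ (gsTop i) ↔ (gsInv i).1 = true := by
  fin_cases i
  · refine iff_of_true ?_ rfl
    letI : TopologicalSpace ℕ := gsTop 0
    haveI : DiscreteTopology ℕ := ⟨rfl⟩
    infer_instance
  · refine iff_of_false ?_ (by decide)
    intro h
    have h2 : IsOpen[gsTop 1] {(1:ℕ)}ᶜ := (isOpen_compl_iff' (t := gsTop 1)).2 (h.t1 1)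
    rcases (TopologicalSpace.isOpen_top_iff _).1 h2 with he | he
    · have : (0:ℕ) ∈ ({(1:ℕ)}ᶜ : Set ℕ) := by simp
      rw [he] at this; exact this
    · have : (1:ℕ) ∈ ({(1:ℕ)}ᶜ : Set ℕ) := he ▸ Set.mem_univ 1
      exact this rfl
  · refine iff_of_true ?_ rfl
    letI : TopologicalSpace ℕ := gsTop 2
    exact ⟨fun x => (isOpen_compl_iff' (t := gsTop 2)).1
      ((gsTop2_isOpen _).2 (Or.inr (by simp)))⟩
  · refine iff_of_false ?_ (by decide)
    intro h
    have h2 : IsOpen[gsTop 3] {(1:ℕ)}ᶜ := (isOpen_compl_iff' (t := gsTop 3)).2 (h.t1 1)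
    rcases (gsTop3_isOpen _).1 h2 with he | he | ⟨n, he⟩
    · have : (0:ℕ) ∈ ({(1:ℕ)}ᶜ : Set ℕ) := by simp
      rw [he] at this; exact this
    · have : (1:ℕ) ∈ ({(1:ℕ)}ᶜ : Set ℕ) := he ▸ Set.mem_univ 1
      exact this rfl
    · have h3 : (n+2 : ℕ) ∈ ({(1:ℕ)}ᶜ : Set ℕ) := by simp
      rw [he] at h3
      simp only [Set.mem_Iic] at h3
      omega
  · refine iff_of_false ?_ (by decide)
    intro h
    have h2 : IsOpen[gsTop 4] {(1:ℕ)}ᶜ := (isOpen_compl_iff' (t := gsTop 4)).2 (h.t1 1)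
    rcases (gsTop4_isOpen _).1 h2 with he | ⟨n, he⟩
    · have : (0:ℕ) ∈ ({(1:ℕ)}ᶜ : Set ℕ) := by simp
      rw [he] at this; exact this
    · have h3 : (0:ℕ) ∈ ({(1:ℕ)}ᶜ : Set ℕ) := by simp
      rw [he] at h3
      have hn0 : n = 0 := Nat.le_zero.1 h3
      have : (1:ℕ) ∈ Set.Ici n := by simp [hn0]
      rw [← he] at this
      exact this rfl

lemma gs_t0 (i : Fin 5) : @T0Space ℕ (gsTop i) ↔ (gsInv i).2.1 = true := by
  fin_cases i
  · refine iff_of_true ?_ rfl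
    letI : TopologicalSpace ℕ := gsTop 0
    haveI : DiscreteTopology ℕ := ⟨rfl⟩
    infer_instance
  · refine iff_of_false ?_ (by decide)
    intro h
    letI : TopologicalSpace ℕ := gsTop 1
    have hins : Inseparable (0:ℕ) 1 := by
      rw [inseparable_iff_forall_isOpen]
      intro s hs
      rcases (TopologicalSpace.isOpen_top_iff _).1 hs with rfl | rfl <;> simp
    exact absurd (hins.eq) (by decide)
  · refine iff_of_true ?_ rfl
    letI : TopologicalSpace ℕ := gsTop 2
    haveI : T1Space ℕ := ⟨fun x => (isOpen_compl_iff' (t := gsTop 2)).1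
      ((gsTop2_isOpen _).2 (Or.inr (by simp)))⟩
    infer_instance
  · refine iff_of_true ?_ rfl
    letI : TopologicalSpace ℕ := gsTop 3
    refine ⟨fun x y h => ?_⟩
    rw [inseparable_iff_forall_isOpen] at h
    have h1 := h (Set.Iic x) ((gsTop3_isOpen _).2 (Or.inr (Or.inr ⟨x, rfl⟩)))
    have h2 := h (Set.Iic y) ((gsTop3_isOpen _).2 (Or.inr (Or.inr ⟨y, rfl⟩)))
    simp only [Set.mem_Iic] at h1 h2
    exact le_antisymm (h2.2 le_rfl) (h1.1 le_rfl)
  · refine iff_of_true ?_ rfl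
    letI : TopologicalSpace ℕ := gsTop 4
    refine ⟨fun x y h => ?_⟩
    rw [inseparable_iff_forall_isOpen] at h
    have h1 := h (Set.Ici x) ((gsTop4_isOpen _).2 (Or.inr ⟨x, rfl⟩))
    have h2 := h (Set.Ici y) ((gsTop4_isOpen _).2 (Or.inr ⟨y, rfl⟩))
    simp only [Set.mem_Ici] at h1 h2
    exact le_antisymm (h1.1 le_rfl) (h2.2 le_rfl)

lemma gs_fin (i : Fin 5) :
    (∃ s : Set ℕ, IsOpen[gsTop i] s ∧ s.Finite ∧ s.Nonempty) ↔ (gsInv i).2.2 = true := by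
  fin_cases i
  · exact iff_of_true ⟨{0}, gsTop0_isOpen _, Set.finite_singleton 0, ⟨0, rfl⟩⟩ rfl
  · refine iff_of_false ?_ (by decide)
    rintro ⟨s, hs, hfin, hne⟩
    rcases (TopologicalSpace.isOpen_top_iff _).1 hs with rfl | rfl
    · exact Set.not_nonempty_empty hne
    · exact Set.infinite_univ hfin
  · refine iff_of_false ?_ (by decide)
    rintro ⟨s, hs, hfin, hne⟩
    rcases (gsTop2_isOpen _).1 hs with rfl | hc
    · exact Set.not_nonempty_empty hne
    · have : (Set.univ : Set ℕ).Finite := by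
        rw [← Set.union_compl_self s]
        exact hfin.union hc
      exact Set.infinite_univ this
  · exact iff_of_true ⟨Set.Iic 0, (gsTop3_isOpen _).2 (Or.inr (Or.inr ⟨0, rfl⟩)),
      Set.finite_Iic 0, ⟨0, by simp⟩⟩ rfl
  · refine iff_of_false ?_ (by decide)
    rintro ⟨s, hs, hfin, hne⟩
    rcases (gsTop4_isOpen _).1 hs with rfl | ⟨n, rfl⟩
    · exact Set.not_nonempty_empty hne
    · exact (Set.Ici_infinite n) hfin

lemma t1_transfer {α β : Type*} [tα : TopologicalSpace α] [tβ : TopologicalSpace β]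
    (g : α ≃ₜ β) (h : T1Space α) : T1Space β :=
  haveI := h
  g.symm.isEmbedding.t1Space

lemma t0_transfer {α β : Type*} [tα : TopologicalSpace α] [tβ : TopologicalSpace β]
    (g : α ≃ₜ β) (h : T0Space α) : T0Space β :=
  haveI := h
  g.symm.isEmbedding.t0Space

lemma fin_transfer {α β : Type*} [tα : TopologicalSpace α] [tβ : TopologicalSpace β]
    (g : α ≃ₜ β) (h : ∃ s : Set α, IsOpen s ∧ s.Finite ∧ s.Nonempty) :
    ∃ s : Set β, IsOpen s ∧ s.Finite ∧ s.Nonempty := by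
  obtain ⟨s, ho, hf, hn⟩ := h
  exact ⟨g '' s, g.isOpen_image.2 ho, hf.image g, hn.image g⟩

lemma gs_unique {i j : Fin 5} (g : @Homeomorph ℕ ℕ (gsTop i) (gsTop j)) : i = j := by
  apply gsInv_inj
  have gsymm : @Homeomorph ℕ ℕ (gsTop j) (gsTop i) := @Homeomorph.symm ℕ ℕ (gsTop i) (gsTop j) g
  have h1 : (gsInv i).1 = (gsInv j).1 := by
    have := Iff.trans (gs_t1 i).symm (Iff.trans
      ⟨@t1_transfer ℕ ℕ (gsTop i) (gsTop j) g, @t1_transfer ℕ ℕ (gsTop j) (gsTop i) gsymm⟩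
      (gs_t1 j))
    revert this
    cases (gsInv i).1 <;> cases (gsInv j).1 <;> simp
  have h2 : (gsInv i).2.1 = (gsInv j).2.1 := by
    have := Iff.trans (gs_t0 i).symm (Iff.trans
      ⟨@t0_transfer ℕ ℕ (gsTop i) (gsTop j) g, @t0_transfer ℕ ℕ (gsTop j) (gsTop i) gsymm⟩
      (gs_t0 j))
    revert this
    cases (gsInv i).2.1 <;> cases (gsInv j).2.1 <;> simp
  have h3 : (gsInv i).2.2 = (gsInv j).2.2 := by
    have := Iff.trans (gs_fin i).symm (Iff.trans
      ⟨@fin_transfer ℕ ℕ (gsTop i) (gsTop j) g, @fin_transfer ℕ ℕ (gsTop j) (gsTop i) gsymm⟩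
      (gs_fin j))
    revert this
    cases (gsInv i).2.2 <;> cases (gsInv j).2.2 <;> simp
  exact Prod.ext h1 (Prod.ext h2 h3)


/-- Ginsburg–Sands theorem: every infinite topological space has a subspace
homeomorphic to exactly one of the five topologies on ℕ: discrete, indiscrete,
cofinite, initial-segment, final-segment. -/
theorem ginsburg_sands
    (X : Type*) [TopologicalSpace X] [Infinite X] :
    ∃ S : Set X, ∃! i : Fin 5, Nonempty (@Homeomorph S ℕ _ (gsTop i)) := by
  obtain ⟨S, i, hSi⟩ := exists_gs X
  refine ⟨S, i, hSi, fun j hj => ?_⟩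
  obtain ⟨gj⟩ := hj
  obtain ⟨gi⟩ := hSi
  have gg : @Homeomorph ℕ ℕ (gsTop j) (gsTop i) :=
    @Homeomorph.trans ℕ (↥S) ℕ (gsTop j) _ (gsTop i)
      (@Homeomorph.symm (↥S) ℕ _ (gsTop j) gj) gi
  exact gs_unique gg
end
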